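/- arXiv:2211.09341 — 4 statements merged into one kernel-verified Lean document; each statement's English description precedes it below -/
import Mathlib

section
/- Let G be a bi-regular bipartite graph with parts A and B and edge set E (every vertex of A has the same degree and every vertex of B has the same degree, both positive), and let λ(G) be its second largest normalized singular value. Then for every nonempty subset B' ⊆ B of density μ = |B'|/|B| and every E' ⊆ E, |p₁ − p₂| ≤ λ(G)/√μ, where p₁ is the probability that (a,b) ∈ E' when b is uniform in B' and a is uniform among the neighbors of b, and p₂ is the average over a uniform a ∈ A of the fraction of b ∈ N(a) ∩ B' with (a,b) ∈ E' (this fraction taken to be 0 when N(a) ∩ B' is empty). -/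
/-- The second largest normalized singular value of a bi-regular bipartite graph with parts
`A`, `B`, edge set `E` and degrees `dA` (on `A`) and `dB` (on `B`): for a bi-regular graph the
normalized adjacency matrix `M` (with entries `1/√(dA·dB)` on edges) has top singular value `1`
attained on the normalized all-ones vectors, so the second largest singular value is the
operator norm of `M` minus its top rank-one component, whose entries are all
`1/√(|A|·|B|)`. -/
noncomputable def lambdaBip {A B : Type} [Fintype A] [Fintype B] [DecidableEq A] [DecidableEq B]
    (E : Finset (A × B)) (dA dB : ℕ) : ℝ :=
  ‖LinearMap.toContinuousLinearMap (Matrix.toEuclideanLin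
    (Matrix.of fun (a : A) (b : B) =>
      (if (a, b) ∈ E then 1 / Real.sqrt ((dA : ℝ) * (dB : ℝ)) else 0) -
        1 / Real.sqrt ((Fintype.card A : ℝ) * (Fintype.card B : ℝ))))‖

open Finset RealInnerProductSpace

private lemma aux1Bip (S k sa sb sA sB : ℝ) (hsa : sa ≠ 0) (hsb : sb ≠ 0) (hsA : sA ≠ 0)
    (hk : k ≠ 0) (hcross : sa * sA = sb * sB) :
    S / sb ^ 2 / k = sB / (sA * k) * (1 / (sa * sb) * S) := by
  field_simp
  linear_combination S * hcross

private lemma aux2Bip (F k sA sB : ℝ) (hsA : sA ≠ 0) (hsB : sB ≠ 0) (hk : k ≠ 0) :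
    F / sA ^ 2 = sB / (sA * k) * (1 / (sA * sB) * k * F) := by
  field_simp

private lemma aux3Bip (lam sA sB sk : ℝ) (hsA : sA ≠ 0) (hsB : sB ≠ 0) (hsk : sk ≠ 0) :
    sB / (sA * sk ^ 2) * (lam * (sA * sk)) = lam / (sk / sB) := by
  field_simp

set_option maxHeartbeats 1000000 in
/-- Sampling in bi-regular bipartite inclusion graphs: for every nonempty
`B' ⊆ B` of density `μ` and every `E' ⊆ E`, `|p₁ − p₂| ≤ λ(G)/√μ`, where `p₁` is the
probability of `E'` when `b` is uniform in `B'` and `a` uniform among its neighbors, and `p₂`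
is the average over uniform `a ∈ A` of the fraction of `b ∈ N(a) ∩ B'` with `(a,b) ∈ E'`. -/
theorem biregular_edge_sampling {A B : Type} [Fintype A] [Fintype B]
    [DecidableEq A] [DecidableEq B] [Nonempty A] [Nonempty B]
    (E : Finset (A × B)) (dA dB : ℕ) (hdA : 0 < dA) (hdB : 0 < dB)
    (hregA : ∀ a : A, (E.filter (fun e => e.1 = a)).card = dA)
    (hregB : ∀ b : B, (E.filter (fun e => e.2 = b)).card = dB)
    (E' : Finset (A × B)) (hE' : E' ⊆ E)
    (B' : Finset B) (hB' : B'.Nonempty) :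
    |(∑ b ∈ B', ((E'.filter (fun e => e.2 = b)).card : ℝ) / (dB : ℝ)) / (B'.card : ℝ) -
        (∑ a : A, ((E'.filter (fun e => e.1 = a ∧ e.2 ∈ B')).card : ℝ) /
          ((E.filter (fun e => e.1 = a ∧ e.2 ∈ B')).card : ℝ)) / (Fintype.card A : ℝ)| ≤
      lambdaBip E dA dB / Real.sqrt ((B'.card : ℝ) / (Fintype.card B : ℝ)) := by
  classical
  have hnA : (0:ℝ) < (Fintype.card A : ℝ) := by exact_mod_cast Fintype.card_pos
  have hnB : (0:ℝ) < (Fintype.card B : ℝ) := by exact_mod_cast Fintype.card_pos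
  have hk : (0:ℝ) < (B'.card : ℝ) := by exact_mod_cast hB'.card_pos
  have hdA' : (0:ℝ) < (dA : ℝ) := by exact_mod_cast hdA
  have hdB' : (0:ℝ) < (dB : ℝ) := by exact_mod_cast hdB
  -- double counting
  have hcount : dA * Fintype.card A = dB * Fintype.card B := by
    have h1 : E.card = ∑ a : A, (E.filter (fun e => e.1 = a)).card :=
      Finset.card_eq_sum_card_fiberwise (fun x _ => Finset.mem_univ _)
    have h2 : E.card = ∑ b : B, (E.filter (fun e => e.2 = b)).card :=
      Finset.card_eq_sum_card_fiberwise (fun x _ => Finset.mem_univ _)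
    simp only [hregA, hregB, Finset.sum_const, Finset.card_univ, smul_eq_mul] at h1 h2
    rw [mul_comm dA, mul_comm dB]
    omega
  -- row fibers, as subsets of B'
  have hrow : ∀ (F : Finset (A × B)) (a : A),
      (B'.filter (fun b => (a, b) ∈ F)).card = (F.filter (fun e => e.1 = a ∧ e.2 ∈ B')).card := by
    intro F a
    refine Finset.card_nbij' (fun b => (a, b)) (fun e => e.2) ?_ ?_ ?_ ?_
    · intro b hb
      simp only [Finset.mem_coe, Finset.mem_filter] at hb
      simp [Finset.mem_filter, hb.1, hb.2]
    · rintro ⟨a', b⟩ he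
      simp only [Finset.mem_coe, Finset.mem_filter] at he
      obtain ⟨hF, h1, h2⟩ := he
      subst h1
      simp [Finset.mem_filter, h2, hF]
    · intro b _; rfl
    · rintro ⟨a', b⟩ he
      simp only [Finset.mem_coe, Finset.mem_filter] at he
      obtain ⟨_, h1, _⟩ := he
      simp [h1]
  -- the two ways of counting E' edges into B'
  have hS : ∑ b ∈ B', (E'.filter (fun e => e.2 = b)).card
      = ∑ a : A, (E'.filter (fun e => e.1 = a ∧ e.2 ∈ B')).card := by
    have h1 : (E'.filter (fun e => e.2 ∈ B')).card
        = ∑ b ∈ B', ((E'.filter (fun e => e.2 ∈ B')).filter (fun e => e.2 = b)).card :=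
      Finset.card_eq_sum_card_fiberwise (fun x hx => (Finset.mem_filter.mp hx).2)
    have h2 : (E'.filter (fun e => e.2 ∈ B')).card
        = ∑ a : A, ((E'.filter (fun e => e.2 ∈ B')).filter (fun e => e.1 = a)).card :=
      Finset.card_eq_sum_card_fiberwise (fun x _ => Finset.mem_univ _)
    have e1 : ∀ b ∈ B', (E'.filter (fun e => e.2 ∈ B')).filter (fun e => e.2 = b)
        = E'.filter (fun e => e.2 = b) := by
      intro b hb
      ext e
      simp only [Finset.mem_filter]
      constructor
      · rintro ⟨⟨h1, _⟩, h3⟩; exact ⟨h1, h3⟩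
      · rintro ⟨h1, h3⟩; exact ⟨⟨h1, h3 ▸ hb⟩, h3⟩
    have e2 : ∀ a : A, (E'.filter (fun e => e.2 ∈ B')).filter (fun e => e.1 = a)
        = E'.filter (fun e => e.1 = a ∧ e.2 ∈ B') := by
      intro a
      ext e
      simp only [Finset.mem_filter]
      tauto
    rw [Finset.sum_congr rfl (fun b hb => congrArg Finset.card (e1 b hb))] at h1
    rw [Finset.sum_congr rfl (fun a _ => congrArg Finset.card (e2 a))] at h2
    omega
  -- the normalized matrix
  set N : Matrix A B ℝ := Matrix.of fun (a : A) (b : B) =>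
      (if (a, b) ∈ E then 1 / Real.sqrt ((dA : ℝ) * (dB : ℝ)) else 0) -
        1 / Real.sqrt ((Fintype.card A : ℝ) * (Fintype.card B : ℝ)) with hN
  have hlam : lambdaBip E dA dB = ‖LinearMap.toContinuousLinearMap (Matrix.toEuclideanLin N)‖ := by
    rw [lambdaBip, hN]
  set f : EuclideanSpace ℝ A := WithLp.toLp 2 (fun a =>
    ((E'.filter (fun e => e.1 = a ∧ e.2 ∈ B')).card : ℝ) /
      ((E.filter (fun e => e.1 = a ∧ e.2 ∈ B')).card : ℝ)) with hf
  set χ : EuclideanSpace ℝ B := WithLp.toLp 2 (fun b => if b ∈ B' then (1:ℝ) else 0) with hχ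
  have hf01 : ∀ a : A, 0 ≤ f a ∧ f a ≤ 1 := by
    intro a
    constructor
    · rw [hf]; positivity
    · rw [hf]
      rcases Nat.eq_zero_or_pos (E.filter (fun e => e.1 = a ∧ e.2 ∈ B')).card with h | h
      · simp [h]
      · apply div_le_one_of_le₀
        · exact Nat.cast_le.mpr (Finset.card_le_card (Finset.filter_subset_filter _ hE'))
        · positivity
  have hfc : ∀ a : A, f a * ((E.filter (fun e => e.1 = a ∧ e.2 ∈ B')).card : ℝ)
      = ((E'.filter (fun e => e.1 = a ∧ e.2 ∈ B')).card : ℝ) := by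
    intro a
    rcases Nat.eq_zero_or_pos (E.filter (fun e => e.1 = a ∧ e.2 ∈ B')).card with h | h
    · have h0 : (E'.filter (fun e => e.1 = a ∧ e.2 ∈ B')).card = 0 :=
        Nat.le_zero.mp (h ▸ Finset.card_le_card (Finset.filter_subset_filter _ hE'))
      simp [hf, h, h0]
    · have h' : ((E.filter (fun e => e.1 = a ∧ e.2 ∈ B')).card : ℝ) ≠ 0 := by positivity
      rw [hf]; field_simp
  -- the inner product computation
  have happly : ∀ a : A, (Matrix.toEuclideanLin N) χ a = ∑ b : B, N a b * χ b := by
    intro a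
    simp [Matrix.toEuclideanLin_apply, Matrix.mulVec, dotProduct]
  have hrowsum : ∀ a : A, ∑ b : B, N a b * χ b
      = (1 / Real.sqrt ((dA : ℝ) * (dB : ℝ))) *
          ((E.filter (fun e => e.1 = a ∧ e.2 ∈ B')).card : ℝ)
        - (1 / Real.sqrt ((Fintype.card A : ℝ) * (Fintype.card B : ℝ))) * (B'.card : ℝ) := by
    intro a
    have : ∀ b : B, N a b * χ b = (if b ∈ B' then
        (if (a, b) ∈ E then 1 / Real.sqrt ((dA : ℝ) * (dB : ℝ)) else 0) -
          1 / Real.sqrt ((Fintype.card A : ℝ) * (Fintype.card B : ℝ)) else 0) := by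
      intro b
      rw [hN, hχ]
      by_cases hb : b ∈ B' <;> simp [hb]
    rw [Finset.sum_congr rfl (fun b _ => this b), Finset.sum_ite_mem, Finset.univ_inter,
      Finset.sum_sub_distrib, Finset.sum_const, ← Finset.sum_filter, Finset.sum_const]
    rw [← hrow E a]
    push_cast
    ring
  have hinner : ⟪f, (Matrix.toEuclideanLin N) χ⟫
      = (1 / Real.sqrt ((dA : ℝ) * (dB : ℝ))) *
          (∑ a : A, ((E'.filter (fun e => e.1 = a ∧ e.2 ∈ B')).card : ℝ))
        - (1 / Real.sqrt ((Fintype.card A : ℝ) * (Fintype.card B : ℝ))) * (B'.card : ℝ) *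
          (∑ a : A, f a) := by
    have h0 : ⟪f, (Matrix.toEuclideanLin N) χ⟫ = ∑ a : A, f a * ((Matrix.toEuclideanLin N) χ a) := by
      simp [PiLp.inner_apply, RCLike.inner_apply, mul_comm]
    rw [h0]
    have h1 : ∀ a : A, f a * ((Matrix.toEuclideanLin N) χ a)
        = (1 / Real.sqrt ((dA : ℝ) * (dB : ℝ))) *
            ((E'.filter (fun e => e.1 = a ∧ e.2 ∈ B')).card : ℝ)
          - (1 / Real.sqrt ((Fintype.card A : ℝ) * (Fintype.card B : ℝ))) * (B'.card : ℝ) * f a := by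
      intro a
      rw [happly a, hrowsum a, mul_sub, ← mul_assoc, mul_comm (f a), mul_assoc, hfc a]
      ring
    rw [Finset.sum_congr rfl (fun a _ => h1 a), Finset.sum_sub_distrib, ← Finset.mul_sum,
      ← Finset.mul_sum]
  -- norms
  have hnf : ‖f‖ ≤ Real.sqrt (Fintype.card A : ℝ) := by
    rw [EuclideanSpace.norm_eq]
    apply Real.sqrt_le_sqrt
    calc ∑ a, ‖f a‖ ^ 2 ≤ ∑ _a : A, 1 := by
          refine Finset.sum_le_sum fun a _ => ?_
          rw [Real.norm_eq_abs, sq_abs]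
          nlinarith [(hf01 a).1, (hf01 a).2]
      _ = (Fintype.card A : ℝ) := by simp
  have hnχ : ‖χ‖ = Real.sqrt (B'.card : ℝ) := by
    rw [EuclideanSpace.norm_eq]
    congr 1
    simp [hχ, apply_ite (fun x : ℝ => ‖x‖ ^ 2), Finset.sum_ite_mem]
  have hlam0 : 0 ≤ lambdaBip E dA dB := by rw [hlam]; exact norm_nonneg _
  -- the operator norm bound
  have hTχ : ‖(Matrix.toEuclideanLin N) χ‖ ≤ lambdaBip E dA dB * Real.sqrt (B'.card : ℝ) := by
    rw [hlam, ← hnχ]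
    have := (LinearMap.toContinuousLinearMap (Matrix.toEuclideanLin N)).le_opNorm χ
    simpa using this
  have hbound : |⟪f, (Matrix.toEuclideanLin N) χ⟫|
      ≤ lambdaBip E dA dB * (Real.sqrt (Fintype.card A : ℝ) * Real.sqrt (B'.card : ℝ)) := by
    calc |⟪f, (Matrix.toEuclideanLin N) χ⟫| ≤ ‖f‖ * ‖(Matrix.toEuclideanLin N) χ‖ :=
          abs_real_inner_le_norm _ _
      _ ≤ ‖f‖ * (lambdaBip E dA dB * Real.sqrt (B'.card : ℝ)) :=
          mul_le_mul_of_nonneg_left hTχ (norm_nonneg f)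
      _ ≤ Real.sqrt (Fintype.card A : ℝ) * (lambdaBip E dA dB * Real.sqrt (B'.card : ℝ)) :=
          mul_le_mul_of_nonneg_right hnf (by positivity)
      _ = lambdaBip E dA dB * (Real.sqrt (Fintype.card A : ℝ) * Real.sqrt (B'.card : ℝ)) := by
          ring
  -- abbreviate the square roots
  set sA := Real.sqrt (Fintype.card A : ℝ) with hsA
  set sB := Real.sqrt (Fintype.card B : ℝ) with hsB
  set sk := Real.sqrt (B'.card : ℝ) with hsk
  set sa := Real.sqrt (dA : ℝ) with hsa
  set sb := Real.sqrt (dB : ℝ) with hsb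
  have hsA0 : 0 < sA := Real.sqrt_pos.mpr hnA
  have hsB0 : 0 < sB := Real.sqrt_pos.mpr hnB
  have hsk0 : 0 < sk := Real.sqrt_pos.mpr hk
  have hsa0 : 0 < sa := Real.sqrt_pos.mpr hdA'
  have hsb0 : 0 < sb := Real.sqrt_pos.mpr hdB'
  have hsA2 : sA ^ 2 = (Fintype.card A : ℝ) := Real.sq_sqrt hnA.le
  have hsB2 : sB ^ 2 = (Fintype.card B : ℝ) := Real.sq_sqrt hnB.le
  have hsk2 : sk ^ 2 = (B'.card : ℝ) := Real.sq_sqrt hk.le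
  have hsa2 : sa ^ 2 = (dA : ℝ) := Real.sq_sqrt hdA'.le
  have hsb2 : sb ^ 2 = (dB : ℝ) := Real.sq_sqrt hdB'.le
  have hmul1 : Real.sqrt ((dA : ℝ) * (dB : ℝ)) = sa * sb := Real.sqrt_mul hdA'.le _
  have hmul2 : Real.sqrt ((Fintype.card A : ℝ) * (Fintype.card B : ℝ)) = sA * sB :=
    Real.sqrt_mul hnA.le _
  have hcross : sa * sA = sb * sB := by
    rw [hsa, hsA, hsb, hsB, ← Real.sqrt_mul hdA'.le, ← Real.sqrt_mul hdB'.le]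
    congr 1
    exact_mod_cast hcount
  -- the right-hand side
  have hrhs : Real.sqrt ((B'.card : ℝ) / (Fintype.card B : ℝ)) = sk / sB := by
    rw [hsk, hsB]
    exact Real.sqrt_div hk.le _
  -- express p1 via hS
  have hp1 : (∑ b ∈ B', ((E'.filter (fun e => e.2 = b)).card : ℝ) / (dB : ℝ))
      = (∑ a : A, ((E'.filter (fun e => e.1 = a ∧ e.2 ∈ B')).card : ℝ)) / (dB : ℝ) := by
    rw [← Finset.sum_div]
    congr 1
    rw [← Nat.cast_sum, ← Nat.cast_sum, hS]
  rw [hp1]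
  set S : ℝ := ∑ a : A, ((E'.filter (fun e => e.1 = a ∧ e.2 ∈ B')).card : ℝ) with hSdef
  set F : ℝ := ∑ a : A, f a with hF
  -- key algebraic identity
  have h1 : S / (dB : ℝ) / (B'.card : ℝ)
      = sB / (sA * (B'.card : ℝ)) * (1 / (sa * sb) * S) := by
    rw [← hsb2]
    exact aux1Bip S _ sa sb sA sB hsa0.ne' hsb0.ne' hsA0.ne' hk.ne' hcross
  have h2 : F / (Fintype.card A : ℝ)
      = sB / (sA * (B'.card : ℝ)) * (1 / (sA * sB) * (B'.card : ℝ) * F) := by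
    rw [← hsA2]
    exact aux2Bip F _ sA sB hsA0.ne' hsB0.ne' hk.ne'
  have hkey : S / (dB : ℝ) / (B'.card : ℝ) - F / (Fintype.card A : ℝ)
      = (sB / (sA * (B'.card : ℝ))) * ⟪f, (Matrix.toEuclideanLin N) χ⟫ := by
    rw [hinner, hmul1, hmul2, h1, h2]
    ring
  rw [hkey, hrhs, abs_mul]
  have habs : |sB / (sA * (B'.card : ℝ))| = sB / (sA * (B'.card : ℝ)) := by
    apply abs_of_pos; positivity
  rw [habs]
  calc sB / (sA * (B'.card : ℝ)) * |⟪f, (Matrix.toEuclideanLin N) χ⟫|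
      ≤ sB / (sA * (B'.card : ℝ)) * (lambdaBip E dA dB * (sA * sk)) := by
        apply mul_le_mul_of_nonneg_left hbound
        positivity
    _ = lambdaBip E dA dB / (sk / sB) := by
        rw [← hsk2]
        exact aux3Bip _ sA sB sk hsA0.ne' hsB0.ne' hsk0.ne'
end

section
/- Let (x, σ) be an excellent pair and let f : F_q^n → F_q be any function such that for every point y with 𝒞_{x,σ} ∩ 𝒞_y ≠ ∅, f(y) is a most frequent value among the values T(C)(y) over C ∈ 𝒞_{x,σ} ∩ 𝒞_y. Then, for C uniform in 𝒞_{x,σ} and y uniform in C, Pr[f(y) = T(C)(y)] ≥ 1 − γ. -/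
open MvPolynomial

/-- A cube: a 3-dimensional affine subspace of `F^n`. -/
def IsCube (F : Type) [Field F] [Fintype F] (n : ℕ) (C : AffineSubspace F (Fin n → F)) : Prop :=
  (C : Set (Fin n → F)).Nonempty ∧ Module.finrank F C.direction = 3

/-- A line: a 1-dimensional affine subspace of `F^n`. -/
def IsLine (F : Type) [Field F] [Fintype F] (n : ℕ) (ℓ : AffineSubspace F (Fin n → F)) : Prop :=
  (ℓ : Set (Fin n → F)).Nonempty ∧ Module.finrank F ℓ.direction = 1

/-- `𝒞_x`: cubes containing the point `x`. -/
def cubesOn (F : Type) [Field F] [Fintype F] (n : ℕ) (x : Fin n → F) :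
    Set (AffineSubspace F (Fin n → F)) :=
  {C | IsCube F n C ∧ x ∈ C}

/-- `𝒞_{x,y}`: cubes containing the points `x` and `y`. -/
def cubesOn2 (F : Type) [Field F] [Fintype F] (n : ℕ) (x y : Fin n → F) :
    Set (AffineSubspace F (Fin n → F)) :=
  {C | IsCube F n C ∧ x ∈ C ∧ y ∈ C}

/-- `𝒞_{x,σ}`: cubes containing `x` on which the table `T` gives `x` the value `σ`. -/
def cubesVal (F : Type) [Field F] [Fintype F] (n : ℕ)
    (T : AffineSubspace F (Fin n → F) → (Fin n → F) → F) (x : Fin n → F) (σ : F) :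
    Set (AffineSubspace F (Fin n → F)) :=
  {C | IsCube F n C ∧ x ∈ C ∧ T C x = σ}

/-- `μ_x(A)`: measure of `A` relative to all cubes containing `x`. -/
noncomputable def muX (F : Type) [Field F] [Fintype F] (n : ℕ) (x : Fin n → F)
    (A : Set (AffineSubspace F (Fin n → F))) : ℝ :=
  (A.ncard : ℝ) / ((cubesOn F n x).ncard : ℝ)

/-- `μ_{x,y}(A)`: measure of `A` relative to all cubes containing `x` and `y`. -/
noncomputable def muXY (F : Type) [Field F] [Fintype F] (n : ℕ) (x y : Fin n → F)
    (A : Set (AffineSubspace F (Fin n → F))) : ℝ :=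
  (A.ncard : ℝ) / ((cubesOn2 F n x y).ncard : ℝ)

/-- Two cubes intersecting in a plane (a 2-dimensional affine subspace). -/
def PlanePair (F : Type) [Field F] [Fintype F] (n : ℕ)
    (C₁ C₂ : AffineSubspace F (Fin n → F)) : Prop :=
  IsCube F n C₁ ∧ IsCube F n C₂ ∧
    ((C₁ ⊓ C₂ : AffineSubspace F (Fin n → F)) : Set (Fin n → F)).Nonempty ∧
    Module.finrank F (C₁ ⊓ C₂ : AffineSubspace F (Fin n → F)).direction = 2

/-- `T(C₁)` and `T(C₂)` agree on `C₁ ∩ C₂`. -/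
def Agrees (F : Type) [Field F] [Fintype F] (n : ℕ)
    (T : AffineSubspace F (Fin n → F) → (Fin n → F) → F)
    (C₁ C₂ : AffineSubspace F (Fin n → F)) : Prop :=
  ∀ z : Fin n → F, z ∈ C₁ → z ∈ C₂ → T C₁ z = T C₂ z

/-- `ε(T)`: the acceptance probability of the cube versus cube test. -/
noncomputable def epsT (F : Type) [Field F] [Fintype F] (n : ℕ)
    (T : AffineSubspace F (Fin n → F) → (Fin n → F) → F) : ℝ :=
  (({p : AffineSubspace F (Fin n → F) × AffineSubspace F (Fin n → F) |
      PlanePair F n p.1 p.2 ∧ Agrees F n T p.1 p.2}).ncard : ℝ) /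
  (({p : AffineSubspace F (Fin n → F) × AffineSubspace F (Fin n → F) |
      PlanePair F n p.1 p.2}).ncard : ℝ)

/-- A degree-`d` cubes table: each entry is the restriction to `C` of a polynomial of total
degree at most `d`. -/
def DegTable (F : Type) [Field F] [Fintype F] (n d : ℕ)
    (T : AffineSubspace F (Fin n → F) → (Fin n → F) → F) : Prop :=
  ∀ C : AffineSubspace F (Fin n → F), IsCube F n C →
    ∃ p : MvPolynomial (Fin n) F, p.totalDegree ≤ d ∧ ∀ z ∈ C, T C z = eval z p

/-- `γ = 1/(1000 d³)`. -/
noncomputable def gam (d : ℕ) : ℝ := 1 / (1000 * (d : ℝ) ^ 3)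

/-- `T(C₁)` and `T(C₂)` agree on the line `ℓ`. -/
def LineAgree (F : Type) [Field F] [Fintype F] (n : ℕ)
    (T : AffineSubspace F (Fin n → F) → (Fin n → F) → F)
    (C₁ C₂ ℓ : AffineSubspace F (Fin n → F)) : Prop :=
  ∀ z : Fin n → F, z ∈ ℓ → T C₁ z = T C₂ z

/-- An excellent pair `(x, σ)`: (i) `μ_x(𝒞_{x,σ}) ≥ ε/5`, and (ii) picking `C₁` uniform in
`𝒞_{x,σ}`, a uniform line `ℓ` with `x ∈ ℓ ⊆ C₁`, and `C₂` uniform in `{C ∈ 𝒞_{x,σ} : ℓ ⊆ C}`,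
the probability that `T(C₁)|_ℓ ≠ T(C₂)|_ℓ` is at most `γ`.  (The probability is written as the
sum over the uniformly weighted pairs `(C₁, ℓ)` of the conditional probability over `C₂`,
compared against `γ` times the number of pairs `(C₁, ℓ)`.) -/
def Excellent (F : Type) [Field F] [Fintype F] (n : ℕ)
    (T : AffineSubspace F (Fin n → F) → (Fin n → F) → F)
    (d : ℕ) (ε : ℝ) (x : Fin n → F) (σ : F) : Prop :=
  ε / 5 ≤ muX F n x (cubesVal F n T x σ) ∧
  (∑ᶠ C₁ ∈ cubesVal F n T x σ,
      ∑ᶠ ℓ ∈ {ℓ : AffineSubspace F (Fin n → F) | IsLine F n ℓ ∧ x ∈ ℓ ∧ ℓ ≤ C₁},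
        (({C₂ ∈ cubesVal F n T x σ | ℓ ≤ C₂ ∧ ¬ LineAgree F n T C₁ C₂ ℓ}.ncard : ℝ) /
          ({C₂ ∈ cubesVal F n T x σ | ℓ ≤ C₂}.ncard : ℝ)))
    ≤ gam d * (({p : AffineSubspace F (Fin n → F) × AffineSubspace F (Fin n → F) |
        p.1 ∈ cubesVal F n T x σ ∧ IsLine F n p.2 ∧ x ∈ p.2 ∧ p.2 ≤ p.1}).ncard : ℝ)

/-! ### Auxiliary lemmas -/

section Aux
variable {F : Type} [Field F] [Fintype F] {n : ℕ}

instance instFinAS : Finite (AffineSubspace F (Fin n → F)) :=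
  Finite.of_injective (fun S => (S : Set (Fin n → F))) SetLike.coe_injective

lemma ncard_affine (S : AffineSubspace F (Fin n → F)) (h : (S : Set (Fin n → F)).Nonempty) :
    (S : Set (Fin n → F)).ncard = Fintype.card F ^ Module.finrank F S.direction := by
  classical
  obtain ⟨p, hp⟩ := h
  have e : S.direction ≃ (S : Set (Fin n → F)) :=
    { toFun := fun v => ⟨v.1 +ᵥ p, AffineSubspace.vadd_mem_of_mem_direction v.2 hp⟩
      invFun := fun q => ⟨q.1 -ᵥ p, AffineSubspace.vsub_mem_direction q.2 hp⟩
      left_inv := fun v => by simp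
      right_inv := fun q => by simp }
  have h1 : (S : Set (Fin n → F)).ncard = Nat.card S.direction := by
    rw [← Nat.card_coe_set_eq]
    exact Nat.card_congr e.symm
  have : Fintype S.direction := Fintype.ofFinite _
  rw [h1, Nat.card_eq_fintype_card, Module.card_eq_pow_finrank (K := F)]

lemma isLine_span {x y : Fin n → F} (hxy : x ≠ y) : IsLine F n (affineSpan F {x, y}) := by
  constructor
  · exact ⟨x, left_mem_affineSpan_pair F x y⟩
  · rw [direction_affineSpan, vectorSpan_pair]
    exact finrank_span_singleton (by simpa [sub_eq_zero] using hxy)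

lemma span_le_of_mem {x y : Fin n → F} {C : AffineSubspace F (Fin n → F)}
    (hx : x ∈ C) (hy : y ∈ C) : affineSpan F {x, y} ≤ C := by
  rw [affineSpan_le]
  exact Set.insert_subset hx (Set.singleton_subset_iff.2 hy)

lemma line_eq_span {x y : Fin n → F} {ℓ : AffineSubspace F (Fin n → F)}
    (hl : IsLine F n ℓ) (hx : x ∈ ℓ) (hy : y ∈ ℓ) (hxy : x ≠ y) :
    ℓ = affineSpan F {x, y} := by
  have hle : affineSpan F {x, y} ≤ ℓ := span_le_of_mem hx hy
  have hdir : (affineSpan F {x, y}).direction = ℓ.direction :=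
    Submodule.eq_of_le_of_finrank_eq (AffineSubspace.direction_le hle)
      (by rw [hl.2, (isLine_span hxy).2])
  exact (AffineSubspace.ext_of_direction_eq hdir
    ⟨x, left_mem_affineSpan_pair F x y, hx⟩).symm

/-- generic plurality counting lemma -/
lemma plurality_count {α β : Type*} [DecidableEq β] (S : Finset α) (g : α → β) (v₀ : β)
    [∀ v : β, DecidablePred (fun a => g a = v)] [DecidablePred (fun a => g a ≠ v₀)]
    [∀ a : α, DecidablePred (fun b => g b ≠ g a)]
    (hv : ∀ v, (S.filter (fun a => g a = v)).card ≤ (S.filter (fun a => g a = v₀)).card) :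
    (S.filter (fun a => g a ≠ v₀)).card * S.card ≤
      ∑ a ∈ S, (S.filter (fun b => g b ≠ g a)).card := by
  classical
  have key : ∀ a ∈ S, (S.filter (fun b => g b ≠ v₀)).card ≤
      (S.filter (fun b => g b ≠ g a)).card := by
    intro a _
    have h1 := Finset.card_filter_add_card_filter_not (s := S) (p := fun b => g b = v₀)
    have h2 := Finset.card_filter_add_card_filter_not (s := S) (p := fun b => g b = g a)
    have e1 : (S.filter (fun b => g b ≠ v₀)).card
        = S.card - (S.filter (fun b => g b = v₀)).card := by
      simp only [ne_eq]
      omega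
    have e2 : (S.filter (fun b => g b ≠ g a)).card
        = S.card - (S.filter (fun b => g b = g a)).card := by
      simp only [ne_eq]
      omega
    rw [e1, e2]
    exact Nat.sub_le_sub_left (hv (g a)) S.card
  calc (S.filter (fun a => g a ≠ v₀)).card * S.card
      = ∑ _a ∈ S, (S.filter (fun b => g b ≠ v₀)).card := by
        rw [Finset.sum_const, smul_eq_mul, mul_comm]
    _ ≤ ∑ a ∈ S, (S.filter (fun b => g b ≠ g a)).card := Finset.sum_le_sum key

/-- finset of points of an affine subspace -/
noncomputable def ptsF (S : AffineSubspace F (Fin n → F)) : Finset (Fin n → F) :=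
  Set.Finite.toFinset (Set.toFinite (S : Set (Fin n → F)))

@[simp] lemma mem_ptsF {S : AffineSubspace F (Fin n → F)} {y : Fin n → F} :
    y ∈ ptsF S ↔ y ∈ S := by simp [ptsF]

/-- finset of lines through `x` inside `C` -/
noncomputable def linesF (x : Fin n → F) (C : AffineSubspace F (Fin n → F)) :
    Finset (AffineSubspace F (Fin n → F)) :=
  Set.Finite.toFinset (Set.toFinite {ℓ | IsLine F n ℓ ∧ x ∈ ℓ ∧ ℓ ≤ C})

@[simp] lemma mem_linesF {x : Fin n → F} {C ℓ : AffineSubspace F (Fin n → F)} :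
    ℓ ∈ linesF x C ↔ IsLine F n ℓ ∧ x ∈ ℓ ∧ ℓ ≤ C := by simp [linesF]

lemma card_ptsF_line {ℓ : AffineSubspace F (Fin n → F)} (hl : IsLine F n ℓ) :
    (ptsF ℓ).card = Fintype.card F := by
  have := ncard_affine ℓ hl.1
  rw [hl.2, pow_one] at this
  rwa [ptsF, ← Set.ncard_eq_toFinset_card]

lemma card_ptsF_cube {C : AffineSubspace F (Fin n → F)} (hC : IsCube F n C) :
    (ptsF C).card = Fintype.card F ^ 3 := by
  have := ncard_affine C hC.1
  rw [hC.2] at this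
  rwa [ptsF, ← Set.ncard_eq_toFinset_card]

/-- decompose a count of points `≠ x` of a cube along the lines through `x` -/
lemma sum_over_lines {x : Fin n → F} {C : AffineSubspace F (Fin n → F)}
    (hx : x ∈ C) (P : (Fin n → F) → Prop) [DecidablePred P] (hP : ∀ y, P y → y ≠ x) :
    ((ptsF C).filter P).card = ∑ ℓ ∈ linesF x C, ((ptsF ℓ).filter P).card := by
  classical
  rw [Finset.card_eq_sum_card_fiberwise (f := fun y => affineSpan F {x, y})
    (t := linesF x C) ?_]
  · refine Finset.sum_congr rfl fun ℓ hℓ => ?_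
    rw [mem_linesF] at hℓ
    congr 1
    ext y
    simp only [Finset.mem_filter, mem_ptsF]
    constructor
    · rintro ⟨⟨hyC, hpy⟩, hsp⟩
      exact ⟨hsp ▸ right_mem_affineSpan_pair F x y, hpy⟩
    · rintro ⟨hyl, hpy⟩
      exact ⟨⟨hℓ.2.2 hyl, hpy⟩,
        (line_eq_span hℓ.1 hℓ.2.1 hyl (Ne.symm (hP y hpy))).symm⟩
  · intro y hy
    rw [Finset.mem_coe, Finset.mem_filter] at hy
    rw [Finset.mem_coe, mem_linesF]
    exact ⟨isLine_span (Ne.symm (hP y hy.2)), left_mem_affineSpan_pair F x y,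
      span_le_of_mem hx (mem_ptsF.mp hy.1)⟩

open Classical in
lemma card_linesF {x : Fin n → F} {C : AffineSubspace F (Fin n → F)}
    (hC : IsCube F n C) (hx : x ∈ C) :
    (linesF x C).card * (Fintype.card F - 1) = Fintype.card F ^ 3 - 1 := by
  have h := sum_over_lines (C := C) hx (fun y => y ≠ x) (fun y hy => hy)
  simp only [Finset.filter_ne'] at h
  have hxpts : x ∈ ptsF C := mem_ptsF.mpr hx
  rw [Finset.card_erase_of_mem hxpts, card_ptsF_cube hC] at h
  have hsum : ∀ ℓ ∈ linesF x C,
      ((ptsF ℓ).erase x).card = Fintype.card F - 1 := by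
    intro ℓ hℓ
    rw [mem_linesF] at hℓ
    rw [Finset.card_erase_of_mem (mem_ptsF.mpr hℓ.2.1), card_ptsF_line hℓ.1]
  rw [Finset.sum_congr rfl hsum, Finset.sum_const, smul_eq_mul] at h
  rw [← h]

end Aux


/-- For an excellent pair `(x, σ)` and a plurality function `f` (at each point
`y` covered by `𝒞_{x,σ}`, `f(y)` is a most frequent value of `T(C)(y)` over `C ∈ 𝒞_{x,σ} ∩ 𝒞_y`),
picking `C` uniform in `𝒞_{x,σ}` and `y` uniform in `C` gives `f(y) = T(C)(y)` with probability
at least `1 − γ`. -/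
theorem plurality_local_agreement {F : Type} [Field F] [Fintype F] {n d : ℕ}
    (hn : 6 ≤ n) (hd : 1 ≤ d)
    (hq : (11 * d : ℝ) < (Fintype.card F : ℝ) ^ ((1 : ℝ) / 9))
    (T : AffineSubspace F (Fin n → F) → (Fin n → F) → F)
    (hT : DegTable F n d T)
    (hε : 10 ^ 7 * (d : ℝ) ^ 6 / (Fintype.card F : ℝ) ≤ epsT F n T)
    (x : Fin n → F) (σ : F) (hexc : Excellent F n T d (epsT F n T) x σ)
    (f : (Fin n → F) → F)
    (hf : ∀ y : Fin n → F, (cubesVal F n T x σ ∩ cubesOn F n y).Nonempty → ∀ v : F,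
      {C ∈ cubesVal F n T x σ ∩ cubesOn F n y | T C y = v}.ncard ≤
        {C ∈ cubesVal F n T x σ ∩ cubesOn F n y | T C y = f y}.ncard) :
    (1 - gam d) * ((cubesVal F n T x σ).ncard : ℝ) ≤
      ∑ᶠ C ∈ cubesVal F n T x σ,
        (({z ∈ (C : Set (Fin n → F)) | f z = T C z}.ncard : ℝ) /
          ((C : Set (Fin n → F)).ncard : ℝ)) := by
  classical
  set q := Fintype.card F with hqdef
  have hq0 : 0 < q := Fintype.card_pos
  have hd0 : (0:ℝ) < (d:ℝ) := by exact_mod_cast hd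
  have hγ0 : 0 < gam d := by rw [gam]; positivity
  have hε0 : (0:ℝ) < epsT F n T :=
    lt_of_lt_of_le (by positivity) hε
  -- the finset of cubes in 𝒞_{x,σ}
  set cubesF : Finset (AffineSubspace F (Fin n → F)) :=
    Set.Finite.toFinset (Set.toFinite (cubesVal F n T x σ)) with hcubesFdef
  have hcoe : (cubesF : Set (AffineSubspace F (Fin n → F))) = cubesVal F n T x σ :=
    Set.Finite.coe_toFinset _
  have hmemcF : ∀ C : AffineSubspace F (Fin n → F),
      C ∈ cubesF ↔ IsCube F n C ∧ x ∈ C ∧ T C x = σ := by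
    intro C
    rw [hcubesFdef, Set.Finite.mem_toFinset]
    rfl
  have hncard : (cubesVal F n T x σ).ncard = cubesF.card := by
    rw [← hcoe, Set.ncard_coe_finset]
  have hfinsum : ∀ g : AffineSubspace F (Fin n → F) → ℝ,
      ∑ᶠ C ∈ cubesVal F n T x σ, g C = ∑ C ∈ cubesF, g C := by
    intro g
    rw [← hcoe, finsum_mem_coe_finset]
  have hfinsuml : ∀ C₁ : AffineSubspace F (Fin n → F),
      ∀ g : AffineSubspace F (Fin n → F) → ℝ,
      ∑ᶠ ℓ ∈ {ℓ : AffineSubspace F (Fin n → F) | IsLine F n ℓ ∧ x ∈ ℓ ∧ ℓ ≤ C₁}, g ℓ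
        = ∑ ℓ ∈ linesF x C₁, g ℓ := by
    intro C₁ g
    rw [show {ℓ : AffineSubspace F (Fin n → F) | IsLine F n ℓ ∧ x ∈ ℓ ∧ ℓ ≤ C₁}
      = ↑(linesF x C₁) from (Set.Finite.coe_toFinset _).symm, finsum_mem_coe_finset]
  -- 𝒞_{x,σ} is nonempty
  have hNpos : 0 < cubesF.card := by
    rcases Finset.eq_empty_or_nonempty cubesF with h | h
    · exfalso
      have h0 : (cubesVal F n T x σ).ncard = 0 := by rw [hncard, h]; simp
      have hmu : muX F n x (cubesVal F n T x σ) = 0 := by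
        rw [muX, h0]; simp
      have h1 := hexc.1
      rw [hmu] at h1
      nlinarith
    · exact Finset.card_pos.mpr h
  obtain ⟨C₀, hC₀⟩ := Finset.card_pos.mp hNpos
  -- `f x = σ`
  have hfx : f x = σ := by
    have hC₀' := (hmemcF C₀).mp hC₀
    have hne : (cubesVal F n T x σ ∩ cubesOn F n x).Nonempty :=
      ⟨C₀, by rw [← hcoe]; exact Finset.mem_coe.mpr hC₀, hC₀'.1, hC₀'.2.1⟩
    have hfull : {C ∈ cubesVal F n T x σ ∩ cubesOn F n x | T C x = σ}
        = cubesVal F n T x σ ∩ cubesOn F n x := by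
      ext C
      simp only [Set.mem_setOf_eq, Set.mem_inter_iff]
      exact ⟨fun h => h.1, fun h => ⟨h, h.1.2.2⟩⟩
    have h1 := hf x hne σ
    rw [hfull] at h1
    have h2 : 0 < (cubesVal F n T x σ ∩ cubesOn F n x).ncard :=
      (Set.ncard_pos (Set.toFinite _)).mpr hne
    have h3 : {C ∈ cubesVal F n T x σ ∩ cubesOn F n x | T C x = f x}.Nonempty := by
      rw [← Set.ncard_pos (Set.toFinite _)]
      omega
    obtain ⟨C, hC⟩ := h3
    have : T C x = σ := hC.1.1.2.2
    rw [← hC.2, this]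
  -- notation for the conditional probabilities
  set SL : AffineSubspace F (Fin n → F) → Finset (AffineSubspace F (Fin n → F)) :=
    fun ℓ => cubesF.filter (fun C => ℓ ≤ C) with hSLdef
  set PR : AffineSubspace F (Fin n → F) → AffineSubspace F (Fin n → F) → ℝ :=
    fun C₁ ℓ => (((SL ℓ).filter (fun C₂ => ¬ LineAgree F n T C₁ C₂ ℓ)).card : ℝ)
      / ((SL ℓ).card : ℝ) with hPRdef
  -- the per-line key estimate
  have key_line : ∀ ℓ : AffineSubspace F (Fin n → F), IsLine F n ℓ → x ∈ ℓ →
      (∑ C₁ ∈ SL ℓ, (((ptsF ℓ).filter (fun y => y ≠ x ∧ T C₁ y ≠ f y)).card : ℝ))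
        ≤ ((q - 1 : ℕ) : ℝ) * ∑ C₁ ∈ SL ℓ, PR C₁ ℓ := by
    intro ℓ hℓ hxℓ
    rcases Finset.eq_empty_or_nonempty (SL ℓ) with hSe | hSne
    · rw [hSe]; simp
    have hs0 : 0 < (SL ℓ).card := Finset.card_pos.mpr hSne
    have hs0' : (0:ℝ) < ((SL ℓ).card : ℝ) := by exact_mod_cast hs0
    set E : Finset (Fin n → F) := (ptsF ℓ).erase x with hEdef
    have hEfilter : ∀ C₁ : AffineSubspace F (Fin n → F),
        (ptsF ℓ).filter (fun y => y ≠ x ∧ T C₁ y ≠ f y)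
          = E.filter (fun y => T C₁ y ≠ f y) := by
      intro C₁
      ext y
      simp only [Finset.mem_filter, hEdef, Finset.mem_erase]
      tauto
    have hEcard : E.card = q - 1 := by
      rw [hEdef, Finset.card_erase_of_mem (mem_ptsF.mpr hxℓ), card_ptsF_line hℓ]
    -- the per-point key estimate
    have hy_key : ∀ y ∈ E,
        (((SL ℓ).filter (fun C => T C y ≠ f y)).card : ℝ) ≤ ∑ C₁ ∈ SL ℓ, PR C₁ ℓ := by
      intro y hy
      rw [hEdef, Finset.mem_erase] at hy
      obtain ⟨hyx, hyℓ⟩ := hy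
      rw [mem_ptsF] at hyℓ
      -- identify `SL ℓ` with `𝒞_{x,σ} ∩ 𝒞_y`
      have hline : ℓ = affineSpan F {x, y} := line_eq_span hℓ hxℓ hyℓ (Ne.symm hyx)
      have hSLy : ∀ C : AffineSubspace F (Fin n → F),
          C ∈ SL ℓ ↔ C ∈ cubesVal F n T x σ ∩ cubesOn F n y := by
        intro C
        rw [hSLdef]
        simp only [Finset.mem_filter, Set.mem_inter_iff]
        constructor
        · rintro ⟨hCc, hlC⟩
          have hCc' := (hmemcF C).mp hCc
          exact ⟨by rw [← hcoe]; exact Finset.mem_coe.mpr hCc, hCc'.1, hlC hyℓ⟩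
        · rintro ⟨hCc, _, hyC⟩
          have hCc2 := hCc
          rw [← hcoe] at hCc2
          refine ⟨hCc2, ?_⟩
          rw [hline]
          exact span_le_of_mem hCc.2.1 hyC
      have hsetw : ∀ w : F, {C ∈ cubesVal F n T x σ ∩ cubesOn F n y | T C y = w}
          = ↑((SL ℓ).filter (fun C => T C y = w)) := by
        intro w
        ext C
        simp only [Set.mem_setOf_eq, Finset.coe_filter, hSLy]
      have hne : (cubesVal F n T x σ ∩ cubesOn F n y).Nonempty := by
        obtain ⟨C, hC⟩ := hSne
        exact ⟨C, (hSLy C).mp hC⟩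
      have hfv : ∀ v : F, ((SL ℓ).filter (fun C => T C y = v)).card
          ≤ ((SL ℓ).filter (fun C => T C y = f y)).card := by
        intro v
        have h1 := hf y hne v
        rwa [hsetw v, hsetw (f y), Set.ncard_coe_finset, Set.ncard_coe_finset] at h1
      have hplu := plurality_count (SL ℓ) (fun C => T C y) (f y) hfv
      have hmono : ∀ C₁ ∈ SL ℓ,
          ((SL ℓ).filter (fun C₂ => T C₂ y ≠ T C₁ y)).card
            ≤ ((SL ℓ).filter (fun C₂ => ¬ LineAgree F n T C₁ C₂ ℓ)).card := by
        intro C₁ _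
        apply Finset.card_le_card
        intro C₂ hC₂
        rw [Finset.mem_filter] at hC₂ ⊢
        exact ⟨hC₂.1, fun hLA => hC₂.2 (hLA y hyℓ).symm⟩
      have htot : ((SL ℓ).filter (fun C => T C y ≠ f y)).card * (SL ℓ).card
          ≤ ∑ C₁ ∈ SL ℓ, ((SL ℓ).filter (fun C₂ => ¬ LineAgree F n T C₁ C₂ ℓ)).card :=
        le_trans hplu (Finset.sum_le_sum hmono)
      rw [hPRdef]
      beta_reduce
      rw [← Finset.sum_div, le_div_iff₀ hs0']
      calc ((((SL ℓ).filter (fun C => T C y ≠ f y)).card : ℝ)) * ((SL ℓ).card : ℝ)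
          = ((((SL ℓ).filter (fun C => T C y ≠ f y)).card * (SL ℓ).card : ℕ) : ℝ) := by
            push_cast; ring
        _ ≤ ((∑ C₁ ∈ SL ℓ, ((SL ℓ).filter
              (fun C₂ => ¬ LineAgree F n T C₁ C₂ ℓ)).card : ℕ) : ℝ) := by
            exact_mod_cast htot
        _ = ∑ C₁ ∈ SL ℓ, (((SL ℓ).filter
              (fun C₂ => ¬ LineAgree F n T C₁ C₂ ℓ)).card : ℝ) := Nat.cast_sum _ _
    -- double counting over (C₁, y)
    have hdouble : ∑ C₁ ∈ SL ℓ, (E.filter (fun y => T C₁ y ≠ f y)).card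
        = ∑ y ∈ E, ((SL ℓ).filter (fun C => T C y ≠ f y)).card := by
      simp only [Finset.card_filter]
      exact Finset.sum_comm
    have hcast : ∑ C₁ ∈ SL ℓ, (((ptsF ℓ).filter (fun y => y ≠ x ∧ T C₁ y ≠ f y)).card : ℝ)
        = ∑ y ∈ E, (((SL ℓ).filter (fun C => T C y ≠ f y)).card : ℝ) := by
      rw [← Nat.cast_sum, ← Nat.cast_sum]
      congr 1
      rw [← hdouble]
      exact Finset.sum_congr rfl fun C₁ _ => by rw [hEfilter C₁]
    rw [hcast]
    calc ∑ y ∈ E, (((SL ℓ).filter (fun C => T C y ≠ f y)).card : ℝ)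
        ≤ ∑ _y ∈ E, ∑ C₁ ∈ SL ℓ, PR C₁ ℓ := Finset.sum_le_sum hy_key
      _ = ((q - 1 : ℕ) : ℝ) * ∑ C₁ ∈ SL ℓ, PR C₁ ℓ := by
          rw [Finset.sum_const, hEcard, nsmul_eq_mul]
  -- the main counting bound
  have hmain : (∑ C ∈ cubesF,
        (((ptsF C).filter (fun y => y ≠ x ∧ T C y ≠ f y)).card : ℝ))
      ≤ ((q - 1 : ℕ) : ℝ) * ∑ C ∈ cubesF, ∑ ℓ ∈ linesF x C, PR C ℓ := by
    have hswap : ∀ g : AffineSubspace F (Fin n → F) → AffineSubspace F (Fin n → F) → ℝ,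
        ∑ C ∈ cubesF, ∑ ℓ ∈ linesF x C, g C ℓ
          = ∑ ℓ ∈ Set.Finite.toFinset (Set.toFinite
              {ℓ : AffineSubspace F (Fin n → F) | IsLine F n ℓ ∧ x ∈ ℓ}),
              ∑ C ∈ SL ℓ, g C ℓ := by
      intro g
      apply Finset.sum_comm'
      intro C ℓ
      simp only [mem_linesF, hSLdef, Finset.mem_filter, Set.Finite.mem_toFinset,
        Set.mem_setOf_eq]
      tauto
    calc ∑ C ∈ cubesF, (((ptsF C).filter (fun y => y ≠ x ∧ T C y ≠ f y)).card : ℝ)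
        = ∑ C ∈ cubesF, ∑ ℓ ∈ linesF x C,
            (((ptsF ℓ).filter (fun y => y ≠ x ∧ T C y ≠ f y)).card : ℝ) := by
          refine Finset.sum_congr rfl fun C hC => ?_
          have hC' := (hmemcF C).mp hC
          rw [sum_over_lines hC'.2.1 (fun y => y ≠ x ∧ T C y ≠ f y) (fun y hy => hy.1),
            Nat.cast_sum]
      _ = ∑ ℓ ∈ Set.Finite.toFinset (Set.toFinite
              {ℓ : AffineSubspace F (Fin n → F) | IsLine F n ℓ ∧ x ∈ ℓ}),
              ∑ C₁ ∈ SL ℓ,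
            (((ptsF ℓ).filter (fun y => y ≠ x ∧ T C₁ y ≠ f y)).card : ℝ) := by
          exact hswap _
      _ ≤ ∑ ℓ ∈ Set.Finite.toFinset (Set.toFinite
              {ℓ : AffineSubspace F (Fin n → F) | IsLine F n ℓ ∧ x ∈ ℓ}),
              ((q - 1 : ℕ) : ℝ) * ∑ C₁ ∈ SL ℓ, PR C₁ ℓ := by
          refine Finset.sum_le_sum fun ℓ hℓ => ?_
          rw [Set.Finite.mem_toFinset] at hℓ
          exact key_line ℓ hℓ.1 hℓ.2
      _ = ((q - 1 : ℕ) : ℝ) * ∑ ℓ ∈ Set.Finite.toFinset (Set.toFinite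
              {ℓ : AffineSubspace F (Fin n → F) | IsLine F n ℓ ∧ x ∈ ℓ}),
              ∑ C₁ ∈ SL ℓ, PR C₁ ℓ := by
          rw [Finset.mul_sum]
      _ = ((q - 1 : ℕ) : ℝ) * ∑ C ∈ cubesF, ∑ ℓ ∈ linesF x C, PR C ℓ := by
          rw [hswap PR]
  -- translate the excellence hypothesis
  have hE : ∑ C ∈ cubesF, ∑ ℓ ∈ linesF x C, PR C ℓ
      ≤ gam d * ∑ C ∈ cubesF, ((linesF x C).card : ℝ) := by
    have h2 := hexc.2
    have hL : (∑ᶠ C₁ ∈ cubesVal F n T x σ,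
        ∑ᶠ ℓ ∈ {ℓ : AffineSubspace F (Fin n → F) | IsLine F n ℓ ∧ x ∈ ℓ ∧ ℓ ≤ C₁},
          (({C₂ ∈ cubesVal F n T x σ | ℓ ≤ C₂ ∧ ¬ LineAgree F n T C₁ C₂ ℓ}.ncard : ℝ) /
            ({C₂ ∈ cubesVal F n T x σ | ℓ ≤ C₂}.ncard : ℝ)))
        = ∑ C ∈ cubesF, ∑ ℓ ∈ linesF x C, PR C ℓ := by
      rw [hfinsum]
      refine Finset.sum_congr rfl fun C₁ hC₁ => ?_
      rw [hfinsuml C₁]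
      refine Finset.sum_congr rfl fun ℓ hℓ => ?_
      have hnum : {C₂ ∈ cubesVal F n T x σ | ℓ ≤ C₂ ∧ ¬ LineAgree F n T C₁ C₂ ℓ}
          = ↑((SL ℓ).filter (fun C₂ => ¬ LineAgree F n T C₁ C₂ ℓ)) := by
        ext C₂
        simp only [Set.mem_setOf_eq, Finset.coe_filter, hSLdef, Finset.mem_filter,
          hmemcF, cubesVal]
        all_goals tauto
      have hden : {C₂ ∈ cubesVal F n T x σ | ℓ ≤ C₂} = ↑(SL ℓ) := by
        ext C₂
        simp only [Set.mem_setOf_eq, hSLdef, Finset.coe_filter, Finset.mem_filter,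
          hmemcF, cubesVal]
        all_goals tauto
      rw [hnum, hden, Set.ncard_coe_finset, Set.ncard_coe_finset, hPRdef]
    have hR : ({p : AffineSubspace F (Fin n → F) × AffineSubspace F (Fin n → F) |
        p.1 ∈ cubesVal F n T x σ ∧ IsLine F n p.2 ∧ x ∈ p.2 ∧ p.2 ≤ p.1}).ncard
        = ∑ C ∈ cubesF, (linesF x C).card := by
      have hset : {p : AffineSubspace F (Fin n → F) × AffineSubspace F (Fin n → F) |
          p.1 ∈ cubesVal F n T x σ ∧ IsLine F n p.2 ∧ x ∈ p.2 ∧ p.2 ≤ p.1}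
          = ↑(cubesF.biUnion (fun C => (linesF x C).image (fun ℓ => (C, ℓ)))) := by
        ext p
        simp only [Set.mem_setOf_eq, Finset.coe_biUnion, Set.mem_iUnion, Finset.mem_coe,
          Finset.mem_image, mem_linesF]
        constructor
        · rintro ⟨h1, h2, h3, h4⟩
          rw [← hcoe] at h1
          exact ⟨p.1, h1, p.2, ⟨h2, h3, h4⟩, rfl⟩
        · rintro ⟨C, hC, ℓ, hℓ, hpe⟩
          rw [← hpe]
          refine ⟨?_, hℓ.1, hℓ.2.1, hℓ.2.2⟩
          rw [← hcoe]
          exact Finset.mem_coe.mpr hC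
      rw [hset, Set.ncard_coe_finset]
      rw [Finset.card_biUnion]
      · refine Finset.sum_congr rfl fun C _ => ?_
        exact Finset.card_image_of_injective _
          (fun a b hab => congrArg Prod.snd hab)
      · intro C hC C' hC' hCC'
        rw [Function.onFun, Finset.disjoint_left]
        rintro p hp hp'
        rw [Finset.mem_image] at hp hp'
        obtain ⟨a, _, ha⟩ := hp
        obtain ⟨b, _, hb⟩ := hp'
        apply hCC'
        rw [← ha] at hb
        exact ((Prod.mk.injEq _ _ _ _).mp hb).1.symm
    rw [hL, hR] at h2
    exact_mod_cast h2
  -- line count per cube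
  have hLC : ∀ C ∈ cubesF, ((q - 1 : ℕ) : ℝ) * ((linesF x C).card : ℝ)
      = ((q ^ 3 - 1 : ℕ) : ℝ) := by
    intro C hC
    have hC' := (hmemcF C).mp hC
    have h := card_linesF hC'.1 hC'.2.1
    calc ((q - 1 : ℕ) : ℝ) * ((linesF x C).card : ℝ)
        = (((linesF x C).card * (q - 1) : ℕ) : ℝ) := by rw [Nat.cast_mul]; ring
      _ = ((q ^ 3 - 1 : ℕ) : ℝ) := by rw [h]
  -- per-cube good-point bound
  have hgood : ∀ C ∈ cubesF,
      ((q ^ 3 : ℕ) : ℝ) - (((ptsF C).filter (fun y => y ≠ x ∧ T C y ≠ f y)).card : ℝ)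
        ≤ ({z ∈ (C : Set (Fin n → F)) | f z = T C z}.ncard : ℝ) := by
    intro C hC
    have hC' := (hmemcF C).mp hC
    have hgset : {z ∈ (C : Set (Fin n → F)) | f z = T C z}
        = ↑((ptsF C).filter (fun z => f z = T C z)) := by
      ext z
      simp only [Set.mem_setOf_eq, Finset.coe_filter, Finset.mem_filter, mem_ptsF,
        SetLike.mem_coe]
    rw [hgset, Set.ncard_coe_finset]
    have hsub : ptsF C ⊆ ((ptsF C).filter (fun z => f z = T C z))
        ∪ ((ptsF C).filter (fun y => y ≠ x ∧ T C y ≠ f y)) := by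
      intro z hz
      rw [Finset.mem_union, Finset.mem_filter, Finset.mem_filter]
      by_cases hgz : f z = T C z
      · exact Or.inl ⟨hz, hgz⟩
      · refine Or.inr ⟨hz, ?_, fun h => hgz h.symm⟩
        rintro rfl
        exact hgz (by rw [hfx, hC'.2.2])
    have hcard := le_trans (Finset.card_le_card hsub) (Finset.card_union_le _ _)
    rw [card_ptsF_cube hC'.1] at hcard
    have : ((q^3 : ℕ) : ℝ) ≤ (((ptsF C).filter (fun z => f z = T C z)).card : ℝ)
        + (((ptsF C).filter (fun y => y ≠ x ∧ T C y ≠ f y)).card : ℝ) := by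
      exact_mod_cast hcard
    linarith
  -- rewrite the goal
  have hgoal : (∑ᶠ C ∈ cubesVal F n T x σ,
      (({z ∈ (C : Set (Fin n → F)) | f z = T C z}.ncard : ℝ) /
        ((C : Set (Fin n → F)).ncard : ℝ)))
      = ∑ C ∈ cubesF, (({z ∈ (C : Set (Fin n → F)) | f z = T C z}.ncard : ℝ) /
        ((q ^ 3 : ℕ) : ℝ)) := by
    rw [hfinsum]
    refine Finset.sum_congr rfl fun C hC => ?_
    have hC' := (hmemcF C).mp hC
    rw [ncard_affine C hC'.1.1, hC'.1.2]
  rw [hgoal, hncard]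
  -- final assembly
  have hq3 : (0:ℝ) < ((q ^ 3 : ℕ) : ℝ) := by
    have : 0 < q ^ 3 := by positivity
    exact_mod_cast this
  have hN0 : (0:ℝ) < (cubesF.card : ℝ) := by exact_mod_cast hNpos
  set A : ℝ := ∑ C ∈ cubesF,
      (((ptsF C).filter (fun y => y ≠ x ∧ T C y ≠ f y)).card : ℝ) with hAdef
  have hAbound : A ≤ gam d * (cubesF.card : ℝ) * ((q ^ 3 - 1 : ℕ) : ℝ) := by
    have h1 : A ≤ ((q - 1 : ℕ) : ℝ) * (gam d * ∑ C ∈ cubesF, ((linesF x C).card : ℝ)) := by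
      refine le_trans hmain ?_
      exact mul_le_mul_of_nonneg_left hE (Nat.cast_nonneg _)
    calc A ≤ ((q - 1 : ℕ) : ℝ) * (gam d * ∑ C ∈ cubesF, ((linesF x C).card : ℝ)) := h1
      _ = gam d * ∑ C ∈ cubesF, ((q - 1 : ℕ) : ℝ) * ((linesF x C).card : ℝ) := by
          rw [Finset.mul_sum, Finset.mul_sum, Finset.mul_sum]
          exact Finset.sum_congr rfl fun C _ => by ring
      _ = gam d * ∑ _C ∈ cubesF, ((q ^ 3 - 1 : ℕ) : ℝ) := by
          rw [Finset.sum_congr rfl hLC]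
      _ = gam d * (cubesF.card : ℝ) * ((q ^ 3 - 1 : ℕ) : ℝ) := by
          rw [Finset.sum_const, nsmul_eq_mul]; ring
  have hstep : ∀ C ∈ cubesF,
      (((q ^ 3 : ℕ) : ℝ) - (((ptsF C).filter (fun y => y ≠ x ∧ T C y ≠ f y)).card : ℝ))
          / ((q ^ 3 : ℕ) : ℝ)
        ≤ ({z ∈ (C : Set (Fin n → F)) | f z = T C z}.ncard : ℝ) / ((q ^ 3 : ℕ) : ℝ) := by
    intro C hC
    exact div_le_div_of_nonneg_right (hgood C hC) hq3.le
  have hLHSsum : ∑ C ∈ cubesF,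
      ((((q ^ 3 : ℕ) : ℝ) - (((ptsF C).filter (fun y => y ≠ x ∧ T C y ≠ f y)).card : ℝ))
        / ((q ^ 3 : ℕ) : ℝ))
      = (cubesF.card : ℝ) - A / ((q ^ 3 : ℕ) : ℝ) := by
    rw [← Finset.sum_div, Finset.sum_sub_distrib, Finset.sum_const, nsmul_eq_mul,
      ← hAdef, sub_div, mul_div_assoc, div_self (ne_of_gt hq3), mul_one]
  have hc : ((q ^ 3 - 1 : ℕ) : ℝ) ≤ ((q ^ 3 : ℕ) : ℝ) := Nat.cast_le.mpr (Nat.sub_le _ _)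
  have hA2 : A ≤ gam d * (cubesF.card : ℝ) * ((q ^ 3 : ℕ) : ℝ) :=
    le_trans hAbound (mul_le_mul_of_nonneg_left hc (by positivity))
  have hdiv : A / ((q ^ 3 : ℕ) : ℝ) ≤ gam d * (cubesF.card : ℝ) := by
    rw [div_le_iff₀ hq3]; exact hA2
  calc (1 - gam d) * (cubesF.card : ℝ)
      = (cubesF.card : ℝ) - gam d * (cubesF.card : ℝ) := by ring
    _ ≤ (cubesF.card : ℝ) - A / ((q ^ 3 : ℕ) : ℝ) := by linarith
    _ = ∑ C ∈ cubesF,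
        ((((q ^ 3 : ℕ) : ℝ) - (((ptsF C).filter (fun y => y ≠ x ∧ T C y ≠ f y)).card : ℝ))
          / ((q ^ 3 : ℕ) : ℝ)) := hLHSsum.symm
    _ ≤ _ := Finset.sum_le_sum hstep
end

section
/- Let x ∈ F_q^n with n ≥ 3 and let Y ⊆ F_q^n ∖ {x} be nonempty. For a cube C ∈ 𝒞_x, let z(C) = |C ∩ Y|. Then the variance of z(C), over a uniformly random C ∈ 𝒞_x, is at most 2·(|Y|/q^n)·q⁴. -/
open MvPolynomial

section ZVarianceAux
set_option linter.unusedSectionVars false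

open Finset Module Submodule

attribute [local instance] Classical.propDecidable

noncomputable instance {F : Type} [Field F] [Fintype F] {n : ℕ} :
    Fintype (Submodule F (Fin n → F)) :=
  have : Finite (Submodule F (Fin n → F)) :=
    Finite.of_injective (fun W => (W : Set (Fin n → F))) SetLike.coe_injective
  Fintype.ofFinite _

variable {F : Type} [Field F] [Fintype F] {n : ℕ}

/-- the set of 3-dimensional subspaces -/
noncomputable def S3 (F : Type) [Field F] [Fintype F] (n : ℕ) : Finset (Submodule F (Fin n → F)) :=
  univ.filter fun W => finrank F ↥W = 3

noncomputable def fc (v : Fin n → F) : ℕ := ((S3 F n).filter fun W => v ∈ W).card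

noncomputable def gc (v w : Fin n → F) : ℕ := ((S3 F n).filter fun W => v ∈ W ∧ w ∈ W).card

lemma card_mem_submodule (W : Submodule F (Fin n → F)) :
    (univ.filter fun v => v ∈ W).card = Fintype.card F ^ finrank F ↥W := by
  rw [← Fintype.card_subtype, card_eq_pow_finrank (K := F) (V := ↥W)]

lemma card_mem_nonzero (W : Submodule F (Fin n → F)) :
    (univ.filter fun v => v ∈ W ∧ v ≠ 0).card = Fintype.card F ^ finrank F ↥W - 1 := by
  have h : (univ.filter fun v => v ∈ W ∧ v ≠ 0)
      = (univ.filter fun v => v ∈ W).erase 0 := by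
    ext v; simp [Finset.mem_erase, and_comm]
  rw [h, Finset.card_erase_of_mem (by simp [W.zero_mem]), card_mem_submodule]


lemma ind_iff {v w : Fin n → F} :
    LinearIndependent F ![v, w] ↔ w ≠ 0 ∧ v ∉ span F {w} := by
  rw [linearIndependent_fin2]
  simp [mem_span_singleton, eq_comm]

lemma exists_equiv_pair {v w v' w' : Fin n → F}
    (h : LinearIndependent F ![v, w]) (h' : LinearIndependent F ![v', w']) :
    ∃ e : (Fin n → F) ≃ₗ[F] (Fin n → F), e v = v' ∧ e w = w' := by
  have hvw : v ≠ w := by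
    rintro rfl
    obtain ⟨-, h2⟩ := linearIndependent_fin2.mp h
    exact h2 1 (one_smul _ _)
  have hvw' : v' ≠ w' := by
    rintro rfl
    obtain ⟨-, h2⟩ := linearIndependent_fin2.mp h'
    exact h2 1 (one_smul _ _)
  have hr : Set.range ![v, w] = ({v, w} : Set (Fin n → F)) := by
    ext u; simp [Matrix.range_cons, or_comm]
  have hr' : Set.range ![v', w'] = ({v', w'} : Set (Fin n → F)) := by
    ext u; simp [Matrix.range_cons, or_comm]
  have hs : LinearIndepOn F id ({v, w} : Set (Fin n → F)) := by
    have := (linearIndepOn_id_range_iff h.injective).mpr h; rwa [hr] at this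
  have hs' : LinearIndepOn F id ({v', w'} : Set (Fin n → F)) := by
    have := (linearIndepOn_id_range_iff h'.injective).mpr h'; rwa [hr'] at this
  let b1 := Basis.extend hs
  let b2 := Basis.extend hs'
  haveI : Fintype ↥(LinearIndepOn.extend hs (Set.subset_univ _)) := FiniteDimensional.fintypeBasisIndex b1
  haveI : Fintype ↥(LinearIndepOn.extend hs' (Set.subset_univ _)) := FiniteDimensional.fintypeBasisIndex b2
  have hcard : Fintype.card ↥(LinearIndepOn.extend hs (Set.subset_univ _))
      = Fintype.card ↥(LinearIndepOn.extend hs' (Set.subset_univ _)) := by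
    rw [← finrank_eq_card_basis b1, ← finrank_eq_card_basis b2]
  let iv : ↥(LinearIndepOn.extend hs (Set.subset_univ _)) := ⟨v, LinearIndepOn.subset_extend hs _ (by simp)⟩
  let iw : ↥(LinearIndepOn.extend hs (Set.subset_univ _)) := ⟨w, LinearIndepOn.subset_extend hs _ (by simp)⟩
  let jv : ↥(LinearIndepOn.extend hs' (Set.subset_univ _)) := ⟨v', LinearIndepOn.subset_extend hs' _ (by simp)⟩
  let jw : ↥(LinearIndepOn.extend hs' (Set.subset_univ _)) := ⟨w', LinearIndepOn.subset_extend hs' _ (by simp)⟩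
  have hij : iv ≠ iw := by simp [iv, iw, Subtype.ext_iff, hvw]
  have hij' : jv ≠ jw := by simp [jv, jw, Subtype.ext_iff, hvw']
  let e0 := Fintype.equivOfCardEq hcard
  let e1 := e0.trans (Equiv.swap (e0 iv) jv)
  have he1v : e1 iv = jv := by simp [e1]
  let e2 := e1.trans (Equiv.swap (e1 iw) jw)
  have he2v : e2 iv = jv := by
    have h1 : e1 iv ≠ e1 iw := fun hc => hij (e1.injective hc)
    simp only [e2, Equiv.trans_apply, he1v]
    rw [he1v] at h1
    exact Equiv.swap_apply_of_ne_of_ne h1 hij'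
  have he2w : e2 iw = jw := by simp [e2]
  refine ⟨b1.equiv b2 e2, ?_, ?_⟩
  · calc (b1.equiv b2 e2) v = (b1.equiv b2 e2) (b1 iv) := by
          rw [Basis.extend_apply_self hs iv]
      _ = b2 (e2 iv) := b1.equiv_apply iv b2 e2
      _ = v' := by rw [he2v]; exact Basis.extend_apply_self hs' jv
  · calc (b1.equiv b2 e2) w = (b1.equiv b2 e2) (b1 iw) := by
          rw [Basis.extend_apply_self hs iw]
      _ = b2 (e2 iw) := b1.equiv_apply iw b2 e2
      _ = w' := by rw [he2w]; exact Basis.extend_apply_self hs' jw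

lemma exists_partner (hn : 2 ≤ n) {v : Fin n → F} (hv : v ≠ 0) :
    ∃ u, LinearIndependent F ![v, u] := by
  have hlt : finrank F ↥(span F {v}) < finrank F (Fin n → F) := by
    rw [finrank_span_singleton hv, Module.finrank_fin_fun]
    omega
  have hne : span F ({v} : Set (Fin n → F)) ≠ ⊤ := fun h => by
    rw [h, finrank_top] at hlt; omega
  obtain ⟨u, hu⟩ : ∃ u, u ∉ span F ({v} : Set (Fin n → F)) := by
    by_contra hc
    push_neg at hc
    exact hne (eq_top_iff'.mpr hc)
  refine ⟨u, linearIndependent_fin2.mpr ⟨fun h => ?_, fun a ha => ?_⟩⟩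
  · simp only [Matrix.cons_val_one, Matrix.head_cons] at h
    subst h; exact hu (zero_mem _)
  simp only [Matrix.cons_val_one, Matrix.head_cons, Matrix.cons_val_zero] at ha
  have ha0 : a ≠ 0 := by rintro rfl; simp at ha; exact hv ha.symm
  apply hu
  rw [show u = a⁻¹ • v by rw [← ha, smul_smul, inv_mul_cancel₀ ha0, one_smul]]
  exact smul_mem _ _ (mem_span_singleton_self v)

lemma li_map (e : (Fin n → F) ≃ₗ[F] (Fin n → F)) {v w : Fin n → F}
    (h : LinearIndependent F ![v, w]) : LinearIndependent F ![e v, e w] := by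
  have := h.map' e.toLinearMap e.ker
  have hcomp : (e.toLinearMap ∘ ![v, w]) = ![e v, e w] := by
    funext i; fin_cases i <;> simp
  rwa [hcomp] at this

lemma map_map_symm (e : (Fin n → F) ≃ₗ[F] (Fin n → F)) (W : Submodule F (Fin n → F)) :
    Submodule.map e.toLinearMap (Submodule.map e.symm.toLinearMap W) = W := by
  rw [← Submodule.map_comp]
  simp [LinearEquiv.comp_coe, LinearEquiv.symm_trans_self, Submodule.map_id]

lemma map_symm_map (e : (Fin n → F) ≃ₗ[F] (Fin n → F)) (W : Submodule F (Fin n → F)) :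
    Submodule.map e.symm.toLinearMap (Submodule.map e.toLinearMap W) = W := by
  rw [← Submodule.map_comp]
  simp [LinearEquiv.comp_coe, LinearEquiv.self_trans_symm, Submodule.map_id]

lemma gc_equiv (e : (Fin n → F) ≃ₗ[F] (Fin n → F)) (v w : Fin n → F) :
    gc (e v) (e w) = gc v w := by
  unfold gc
  apply Finset.card_nbij' (i := fun W => Submodule.map e.symm.toLinearMap W)
    (j := fun W => Submodule.map e.toLinearMap W)
  · intro W hW
    simp only [S3, mem_coe, mem_filter, mem_univ, true_and] at hW ⊢
    refine ⟨by rw [LinearEquiv.finrank_map_eq]; exact hW.1, ?_, ?_⟩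
    · have := Submodule.mem_map_of_mem (f := e.symm.toLinearMap) hW.2.1
      simpa using this
    · have := Submodule.mem_map_of_mem (f := e.symm.toLinearMap) hW.2.2
      simpa using this
  · intro W hW
    simp only [S3, mem_coe, mem_filter, mem_univ, true_and] at hW ⊢
    refine ⟨by rw [LinearEquiv.finrank_map_eq]; exact hW.1,
      Submodule.mem_map_of_mem hW.2.1, Submodule.mem_map_of_mem hW.2.2⟩
  · intro W _
    exact map_map_symm e W
  · intro W _
    exact map_symm_map e W

lemma fc_equiv (e : (Fin n → F) ≃ₗ[F] (Fin n → F)) (v : Fin n → F) :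
    fc (e v) = fc v := by
  unfold fc
  apply Finset.card_nbij' (i := fun W => Submodule.map e.symm.toLinearMap W)
    (j := fun W => Submodule.map e.toLinearMap W)
  · intro W hW
    simp only [S3, mem_coe, mem_filter, mem_univ, true_and] at hW ⊢
    refine ⟨by rw [LinearEquiv.finrank_map_eq]; exact hW.1, ?_⟩
    have := Submodule.mem_map_of_mem (f := e.symm.toLinearMap) hW.2
    simpa using this
  · intro W hW
    simp only [S3, mem_coe, mem_filter, mem_univ, true_and] at hW ⊢
    exact ⟨by rw [LinearEquiv.finrank_map_eq]; exact hW.1, Submodule.mem_map_of_mem hW.2⟩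
  · intro W _
    exact map_map_symm e W
  · intro W _
    exact map_symm_map e W

lemma card_nonzero_univ : (univ.filter fun v : Fin n → F => v ≠ 0).card
    = Fintype.card F ^ n - 1 := by
  have h : (univ.filter fun v : Fin n → F => v ≠ 0) = univ.erase 0 := by
    ext v; simp [Finset.mem_erase]
  rw [h, Finset.card_erase_of_mem (mem_univ _), card_univ, Fintype.card_fun, Fintype.card_fin]

lemma fc_const (hn : 3 ≤ n) {v v' : Fin n → F} (hv : v ≠ 0) (hv' : v' ≠ 0) :
    fc v = fc v' := by
  obtain ⟨u, hu⟩ := exists_partner (by omega) hv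
  obtain ⟨u', hu'⟩ := exists_partner (by omega) hv'
  obtain ⟨e, he, -⟩ := exists_equiv_pair hu hu'
  rw [← he, fc_equiv]

lemma fc_eq (hn : 3 ≤ n) {v : Fin n → F} (hv : v ≠ 0) :
    fc v * (Fintype.card F ^ n - 1) = (S3 F n).card * (Fintype.card F ^ 3 - 1) := by
  have way1 : ∑ u ∈ univ.filter (fun u : Fin n → F => u ≠ 0), fc u
      = (Fintype.card F ^ n - 1) * fc v := by
    rw [Finset.sum_congr rfl (fun u hu => fc_const hn (by simpa using hu) hv),
      Finset.sum_const, smul_eq_mul, card_nonzero_univ]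
  have way2 : ∑ u ∈ univ.filter (fun u : Fin n → F => u ≠ 0), fc u
      = (S3 F n).card * (Fintype.card F ^ 3 - 1) := by
    calc ∑ u ∈ univ.filter (fun u : Fin n → F => u ≠ 0), fc u
        = ∑ u ∈ univ.filter (fun u : Fin n → F => u ≠ 0), ∑ W ∈ S3 F n,
            if u ∈ W then 1 else 0 := Finset.sum_congr rfl fun u _ => Finset.card_filter _ _
      _ = ∑ W ∈ S3 F n, ∑ u ∈ univ.filter (fun u : Fin n → F => u ≠ 0),
            if u ∈ W then 1 else 0 := Finset.sum_comm
      _ = ∑ W ∈ S3 F n, (Fintype.card F ^ 3 - 1) := by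
          refine Finset.sum_congr rfl fun W hW => ?_
          have h3 : finrank F ↥W = 3 := by simpa [S3] using hW
          rw [← Finset.card_filter, Finset.filter_filter]
          have h : (univ.filter fun u : Fin n → F => u ≠ 0 ∧ u ∈ W)
              = (univ.filter fun u : Fin n → F => u ∈ W ∧ u ≠ 0) := by
            ext u; simp [and_comm]
          rw [h, card_mem_nonzero, h3]
      _ = (S3 F n).card * (Fintype.card F ^ 3 - 1) := by rw [Finset.sum_const, smul_eq_mul]
  rw [mul_comm (fc v), ← way1, way2]

lemma card_mem_not_span (W : Submodule F (Fin n → F)) {b : Fin n → F}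
    (hb : b ∈ W) (hb0 : b ≠ 0) :
    (univ.filter fun a => a ∈ W ∧ a ∉ span F {b}).card
      = Fintype.card F ^ finrank F ↥W - Fintype.card F := by
  have hle : Submodule.span F {b} ≤ W := (span_singleton_le_iff_mem b W).mpr hb
  have hsub : (univ.filter fun a => a ∈ span F ({b} : Set (Fin n → F)))
      ⊆ (univ.filter fun a => a ∈ W) := fun a ha => by
    simp only [mem_filter, mem_univ, true_and] at ha ⊢; exact hle ha
  have h : (univ.filter fun a => a ∈ W ∧ a ∉ span F {b})
      = (univ.filter fun a => a ∈ W) \ (univ.filter fun a => a ∈ span F ({b} : Set (Fin n → F))) := by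
    ext a
    simp only [mem_filter, mem_univ, true_and, Finset.mem_sdiff]
  rw [h, Finset.card_sdiff_of_subset hsub, card_mem_submodule, card_mem_submodule,
    finrank_span_singleton hb0, pow_one]

lemma card_ind_pairs (W : Submodule F (Fin n → F)) :
    ((univ : Finset ((Fin n → F) × (Fin n → F))).filter fun p =>
        p.1 ∈ W ∧ p.2 ∈ W ∧ LinearIndependent F ![p.1, p.2]).card
      = (Fintype.card F ^ finrank F ↥W - 1) * (Fintype.card F ^ finrank F ↥W - Fintype.card F) := by
  rw [Finset.card_filter, Fintype.sum_prod_type]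
  have hinner : ∀ a b : Fin n → F,
      (if (a ∈ W ∧ b ∈ W ∧ LinearIndependent F ![a, b]) then 1 else 0)
      = (if ((b ∈ W ∧ b ≠ 0) ∧ (a ∈ W ∧ a ∉ span F {b})) then 1 else 0) := by
    intro a b
    refine if_congr ?_ rfl rfl
    rw [ind_iff]
    tauto
  calc ∑ a : Fin n → F, ∑ b : Fin n → F,
        (if (a ∈ W ∧ b ∈ W ∧ LinearIndependent F ![a, b]) then 1 else 0)
      = ∑ b : Fin n → F, ∑ a : Fin n → F,
        (if ((b ∈ W ∧ b ≠ 0) ∧ (a ∈ W ∧ a ∉ span F {b})) then 1 else 0) := by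
        rw [Finset.sum_comm]
        exact Finset.sum_congr rfl fun b _ => Finset.sum_congr rfl fun a _ => hinner a b
    _ = ∑ b : Fin n → F, (if (b ∈ W ∧ b ≠ 0) then
          (Fintype.card F ^ finrank F ↥W - Fintype.card F) else 0) := by
        refine Finset.sum_congr rfl fun b _ => ?_
        by_cases hb : b ∈ W ∧ b ≠ 0
        · have h0 : ∀ a : Fin n → F, (if ((b ∈ W ∧ b ≠ 0) ∧ (a ∈ W ∧ a ∉ span F {b})) then 1 else 0)
              = (if (a ∈ W ∧ a ∉ span F {b}) then (1:ℕ) else 0) := fun a => by simp [hb]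
          rw [Finset.sum_congr rfl (fun a _ => h0 a), ← Finset.card_filter,
            card_mem_not_span W hb.1 hb.2, if_pos hb]
        · simp [hb]
    _ = (Fintype.card F ^ finrank F ↥W - 1) * (Fintype.card F ^ finrank F ↥W - Fintype.card F) := by
        rw [← Finset.sum_filter, Finset.sum_const, smul_eq_mul, card_mem_nonzero]

lemma gc_symm (v w : Fin n → F) : gc v w = gc w v := by
  unfold gc; congr 1; apply Finset.filter_congr; intro W _; rw [and_comm]

lemma gc_dep {v w : Fin n → F} (hv : v ≠ 0) (hw : w ∈ span F {v}) : gc v w = fc v := by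
  unfold gc fc
  congr 1
  apply Finset.filter_congr
  intro W _
  exact ⟨fun h => h.1, fun h => ⟨h, (span_singleton_le_iff_mem v W).mpr h hw⟩⟩

lemma gc_const (hn : 3 ≤ n) {v w v' w' : Fin n → F}
    (h : LinearIndependent F ![v, w]) (h' : LinearIndependent F ![v', w']) :
    gc v w = gc v' w' := by
  obtain ⟨e, he1, he2⟩ := exists_equiv_pair h h'
  rw [← he1, ← he2, gc_equiv]

lemma card_PF : ((univ : Finset ((Fin n → F) × (Fin n → F))).filter fun p =>
      LinearIndependent F ![p.1, p.2]).card
    = (Fintype.card F ^ n - 1) * (Fintype.card F ^ n - Fintype.card F) := by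
  have h : ((univ : Finset ((Fin n → F) × (Fin n → F))).filter fun p =>
      LinearIndependent F ![p.1, p.2])
      = ((univ : Finset ((Fin n → F) × (Fin n → F))).filter fun p =>
        p.1 ∈ (⊤ : Submodule F (Fin n → F)) ∧ p.2 ∈ (⊤ : Submodule F (Fin n → F)) ∧
          LinearIndependent F ![p.1, p.2]) := by
    apply Finset.filter_congr; intro p _; simp
  rw [h, card_ind_pairs, finrank_top, Module.finrank_fin_fun]

lemma gc_eq (hn : 3 ≤ n) {v w : Fin n → F} (h : LinearIndependent F ![v, w]) :
    gc v w * ((Fintype.card F ^ n - 1) * (Fintype.card F ^ n - Fintype.card F))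
      = (S3 F n).card * ((Fintype.card F ^ 3 - 1) * (Fintype.card F ^ 3 - Fintype.card F)) := by
  set PF := ((univ : Finset ((Fin n → F) × (Fin n → F))).filter fun p =>
      LinearIndependent F ![p.1, p.2]) with hPF
  have way1 : ∑ p ∈ PF, gc p.1 p.2
      = ((Fintype.card F ^ n - 1) * (Fintype.card F ^ n - Fintype.card F)) * gc v w := by
    rw [Finset.sum_congr rfl (fun p hp => gc_const hn (Finset.mem_filter.mp hp).2 h),
      Finset.sum_const, smul_eq_mul, card_PF]
  have way2 : ∑ p ∈ PF, gc p.1 p.2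
      = (S3 F n).card * ((Fintype.card F ^ 3 - 1) * (Fintype.card F ^ 3 - Fintype.card F)) := by
    calc ∑ p ∈ PF, gc p.1 p.2
        = ∑ p ∈ PF, ∑ W ∈ S3 F n, if (p.1 ∈ W ∧ p.2 ∈ W) then 1 else 0 :=
          Finset.sum_congr rfl fun p _ => Finset.card_filter _ _
      _ = ∑ W ∈ S3 F n, ∑ p ∈ PF, if (p.1 ∈ W ∧ p.2 ∈ W) then 1 else 0 := Finset.sum_comm
      _ = ∑ W ∈ S3 F n, ((Fintype.card F ^ 3 - 1) * (Fintype.card F ^ 3 - Fintype.card F)) := by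
          refine Finset.sum_congr rfl fun W hW => ?_
          have h3 : finrank F ↥W = 3 := by simpa [S3] using hW
          rw [← Finset.card_filter, Finset.filter_filter]
          have heq : ((univ : Finset ((Fin n → F) × (Fin n → F))).filter fun p =>
              LinearIndependent F ![p.1, p.2] ∧ (p.1 ∈ W ∧ p.2 ∈ W))
              = ((univ : Finset ((Fin n → F) × (Fin n → F))).filter fun p =>
              p.1 ∈ W ∧ p.2 ∈ W ∧ LinearIndependent F ![p.1, p.2]) := by
            apply Finset.filter_congr; intro p _; tauto
          rw [heq, card_ind_pairs, h3]
      _ = (S3 F n).card * ((Fintype.card F ^ 3 - 1) * (Fintype.card F ^ 3 - Fintype.card F)) := by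
          rw [Finset.sum_const, smul_eq_mul]
  rw [mul_comm (gc v w), ← way1, way2]

lemma N_pos (hn : 3 ≤ n) : 0 < (S3 F n).card := by
  rw [Finset.card_pos]
  have hli : LinearIndependent F ((Pi.basisFun F (Fin n)) ∘ Fin.castLE hn) :=
    (Pi.basisFun F (Fin n)).linearIndependent.comp _ (Fin.castLE_injective hn)
  refine ⟨span F (Set.range ((Pi.basisFun F (Fin n)) ∘ Fin.castLE hn)), ?_⟩
  simp only [S3, mem_filter, mem_univ, true_and]
  rw [finrank_span_eq_card hli]
  simp

lemma Ngc_le (hn : 3 ≤ n) {v w : Fin n → F} (h : LinearIndependent F ![v, w]) :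
    (S3 F n).card * gc v w ≤ fc v * fc v := by
  have hv : v ≠ 0 := by
    have := h.ne_zero 0; simpa using this
  set q := Fintype.card F with hq
  set N := (S3 F n).card with hN
  have hq2 : 2 ≤ q := Fintype.one_lt_card
  have h3n : q ^ 3 ≤ q ^ n := Nat.pow_le_pow_right (by omega) hn
  have hq3 : q ≤ q ^ 3 := by
    calc q = q ^ 1 := (pow_one q).symm
      _ ≤ q ^ 3 := Nat.pow_le_pow_right (by omega) (by omega)
  have h1q3 : 1 ≤ q ^ 3 := by omega
  have h1qn : 1 ≤ q ^ n := by omega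
  have hqqn : q ≤ q ^ n := le_trans hq3 h3n
  have hApos : 0 < q ^ n - 1 := by omega
  have hBpos : 0 < q ^ n - q := by
    have : q ^ 1 < q ^ 3 := Nat.pow_lt_pow_right (by omega) (by omega)
    rw [pow_one] at this; omega
  have hfc := fc_eq hn hv
  have hgc := gc_eq hn h
  have key : (q ^ 3 - q) * (q ^ n - 1) ≤ (q ^ 3 - 1) * (q ^ n - q) := by
    zify [h1q3, h1qn, hq3, hqqn]
    have i1 : (0:ℤ) ≤ (q:ℤ) - 1 := by
      have : (2:ℤ) ≤ (q:ℤ) := by exact_mod_cast hq2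
      omega
    have i2 : (0:ℤ) ≤ (q:ℤ) ^ n - (q:ℤ) ^ 3 := by
      have : ((q:ℤ)) ^ 3 ≤ ((q:ℤ)) ^ n := by exact_mod_cast h3n
      omega
    nlinarith [mul_nonneg i1 i2]
  have hposC : 0 < (q ^ n - 1) * ((q ^ n - 1) * (q ^ n - q)) := by positivity
  apply Nat.le_of_mul_le_mul_right _ hposC
  calc N * gc v w * ((q ^ n - 1) * ((q ^ n - 1) * (q ^ n - q)))
      = N * (q ^ n - 1) * (gc v w * ((q ^ n - 1) * (q ^ n - q))) := by ring
    _ = N * (q ^ n - 1) * (N * ((q ^ 3 - 1) * (q ^ 3 - q))) := by rw [hgc]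
    _ = N * N * (q ^ 3 - 1) * ((q ^ 3 - q) * (q ^ n - 1)) := by ring
    _ ≤ N * N * (q ^ 3 - 1) * ((q ^ 3 - 1) * (q ^ n - q)) :=
        Nat.mul_le_mul_left _ key
    _ = (N * (q ^ 3 - 1)) * (N * (q ^ 3 - 1)) * (q ^ n - q) := by ring
    _ = (fc v * (q ^ n - 1)) * (fc v * (q ^ n - 1)) * (q ^ n - q) := by rw [hfc]
    _ = fc v * fc v * ((q ^ n - 1) * ((q ^ n - 1) * (q ^ n - q))) := by ring

lemma fq_bound (hn : 3 ≤ n) {v : Fin n → F} (hv : v ≠ 0) :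
    (Fintype.card F - 1) * fc v * Fintype.card F ^ n
      ≤ 2 * Fintype.card F ^ 4 * (S3 F n).card := by
  set q := Fintype.card F with hq
  set N := (S3 F n).card with hN
  have hq2 : 2 ≤ q := Fintype.one_lt_card
  have h3n : q ^ 3 ≤ q ^ n := Nat.pow_le_pow_right (by omega) hn
  have hq3 : q ≤ q ^ 3 := by
    calc q = q ^ 1 := (pow_one q).symm
      _ ≤ q ^ 3 := Nat.pow_le_pow_right (by omega) (by omega)
  have h1q3 : 1 ≤ q ^ 3 := by omega
  have h1qn : 1 ≤ q ^ n := by omega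
  have h8qn : 8 ≤ q ^ n := le_trans (le_trans (by norm_num : (8:ℕ) ≤ 2 ^ 3)
    (Nat.pow_le_pow_left hq2 3)) h3n
  have hApos : 0 < q ^ n - 1 := by omega
  have hfc := fc_eq hn hv
  have key : (q - 1) * (q ^ 3 - 1) * q ^ n ≤ 2 * q ^ 4 * (q ^ n - 1) := by
    zify [h1q3, h1qn, (by omega : 1 ≤ q)]
    have e1 : ((q:ℤ) - 1) * ((q:ℤ) ^ 3 - 1) ≤ (q:ℤ) ^ 4 - 1 := by nlinarith [(by exact_mod_cast hq2 : (2:ℤ) ≤ (q:ℤ))]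
    have e2 : (8:ℤ) ≤ (q:ℤ) ^ n := by exact_mod_cast h8qn
    have e3 : (0:ℤ) < (q:ℤ) ^ n := by linarith
    have e4 : (0:ℤ) ≤ (q:ℤ) ^ 4 := by positivity
    nlinarith [mul_le_mul_of_nonneg_right e1 (le_of_lt e3),
      mul_le_mul_of_nonneg_right (show (2:ℤ) ≤ (q:ℤ)^n by omega) e4]
  apply Nat.le_of_mul_le_mul_right _ hApos
  calc (q - 1) * fc v * q ^ n * (q ^ n - 1)
      = (q - 1) * q ^ n * (fc v * (q ^ n - 1)) := by ring
    _ = (q - 1) * q ^ n * (N * (q ^ 3 - 1)) := by rw [hfc]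
    _ = N * ((q - 1) * (q ^ 3 - 1) * q ^ n) := by ring
    _ ≤ N * (2 * q ^ 4 * (q ^ n - 1)) := Nat.mul_le_mul_left _ key
    _ = 2 * q ^ 4 * N * (q ^ n - 1) := by ring

lemma dep_count {u : Fin n → F} (hu : u ≠ 0) (s : Finset (Fin n → F)) (x : Fin n → F) :
    (s.filter fun y' => u ∈ span F {y' - x} ∧ y' - x ≠ 0).card ≤ Fintype.card F - 1 := by
  have hcard : (univ.filter fun z : Fin n → F => z ∈ span F {u} ∧ z ≠ 0).card
      = Fintype.card F - 1 := by
    rw [card_mem_nonzero, finrank_span_singleton hu, pow_one]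
  rw [← hcard]
  apply Finset.card_le_card_of_injOn (fun y' => y' - x)
  · intro y' hy'
    simp only [mem_coe, mem_filter, mem_univ, true_and] at hy' ⊢
    obtain ⟨hmem, hne⟩ := hy'.2
    obtain ⟨a, ha⟩ := mem_span_singleton.mp hmem
    have ha0 : a ≠ 0 := by rintro rfl; simp at ha; exact hu ha.symm
    constructor
    · rw [show y' - x = a⁻¹ • u by rw [← ha, smul_smul, inv_mul_cancel₀ ha0, one_smul]]
      exact smul_mem _ _ (mem_span_singleton_self u)
    · exact hne
  · intro a _ b _ hab
    exact sub_left_injective hab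


set_option maxHeartbeats 1000000 in
/-- For nonempty `Y ⊆ F_q^n ∖ {x}` and `z(C) = |C ∩ Y|`, the variance of
`z(C)` over a uniform cube `C ∈ 𝒞_x` is at most `2(|Y|/q^n)q⁴`. -/
theorem z_variance {F : Type} [Field F] [Fintype F] {n : ℕ} (hn : 3 ≤ n)
    (x : Fin n → F) (Y : Set (Fin n → F)) (hY : x ∉ Y) (hYne : Y.Nonempty) :
    (∑ᶠ C ∈ cubesOn F n x, (((C : Set (Fin n → F)) ∩ Y).ncard : ℝ) ^ 2) /
          ((cubesOn F n x).ncard : ℝ) -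
        ((∑ᶠ C ∈ cubesOn F n x, (((C : Set (Fin n → F)) ∩ Y).ncard : ℝ)) /
          ((cubesOn F n x).ncard : ℝ)) ^ 2 ≤
      2 * ((Y.ncard : ℝ) / (Fintype.card F : ℝ) ^ n) * (Fintype.card F : ℝ) ^ 4 := by
  classical
  set q := Fintype.card F with hqdef
  -- Stage A : translate to sums over 3-dim submodules
  have hinj : Function.Injective
      (fun W : Submodule F (Fin n → F) => AffineSubspace.mk' x W) := by
    intro W W' h
    have := congrArg AffineSubspace.direction h
    simpa [AffineSubspace.direction_mk'] using this
  have hc : cubesOn F n x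
      = (fun W : Submodule F (Fin n → F) => AffineSubspace.mk' x W) ''
          {W : Submodule F (Fin n → F) | finrank F ↥W = 3} := by
    ext C
    constructor
    · rintro ⟨⟨hne, hdim⟩, hx⟩
      exact ⟨C.direction, hdim,
        (AffineSubspace.eq_iff_direction_eq_of_mem (AffineSubspace.self_mem_mk' x _) hx).mpr
          (AffineSubspace.direction_mk' x _)⟩
    · rintro ⟨W, hW, rfl⟩
      exact ⟨⟨⟨x, AffineSubspace.self_mem_mk' x W⟩, by
        rw [AffineSubspace.direction_mk']; exact hW⟩, AffineSubspace.self_mem_mk' x W⟩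
  have hset : {W : Submodule F (Fin n → F) | finrank F ↥W = 3} = ↑(S3 F n) := by
    ext W; simp [S3]
  have hYfin : Y.Finite := Y.toFinite
  set YF : Finset (Fin n → F) := hYfin.toFinset with hYF
  set zc : Submodule F (Fin n → F) → ℕ :=
    fun W => (YF.filter fun y => y - x ∈ W).card with hzcdef
  have hzc : ∀ W : Submodule F (Fin n → F),
      (((AffineSubspace.mk' x W : AffineSubspace F (Fin n → F)) : Set (Fin n → F)) ∩ Y).ncard
        = zc W := by
    intro W
    have hseq : ((AffineSubspace.mk' x W : AffineSubspace F (Fin n → F)) : Set (Fin n → F)) ∩ Y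
        = ↑(YF.filter fun y => y - x ∈ W) := by
      ext y
      simp only [Set.mem_inter_iff, SetLike.mem_coe, AffineSubspace.mem_mk',
        Finset.coe_filter, Set.mem_setOf_eq, Set.Finite.mem_toFinset, hYF]
      rw [vsub_eq_sub]
      tauto
    rw [hseq, Set.ncard_coe_finset]
  have hcard : (cubesOn F n x).ncard = (S3 F n).card := by
    rw [hc, Set.ncard_image_of_injective _ hinj, hset, Set.ncard_coe_finset]
  have hsum1 : (∑ᶠ C ∈ cubesOn F n x, (((C : Set (Fin n → F)) ∩ Y).ncard : ℝ))
      = ∑ W ∈ S3 F n, ((zc W : ℕ) : ℝ) := by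
    rw [hc, finsum_mem_image (Set.injOn_of_injective hinj), hset, finsum_mem_coe_finset]
    exact Finset.sum_congr rfl fun W _ => by rw [hzc]
  have hsum2 : (∑ᶠ C ∈ cubesOn F n x, (((C : Set (Fin n → F)) ∩ Y).ncard : ℝ) ^ 2)
      = ∑ W ∈ S3 F n, ((zc W : ℕ) : ℝ) ^ 2 := by
    rw [hc, finsum_mem_image (Set.injOn_of_injective hinj), hset, finsum_mem_coe_finset]
    exact Finset.sum_congr rfl fun W _ => by rw [hzc]
  have hYcard : Y.ncard = YF.card := Set.ncard_eq_toFinset_card Y hYfin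
  rw [hsum1, hsum2, hcard, hYcard]
  -- Stage B : the numeric computation
  set N := (S3 F n).card with hNdef
  obtain ⟨y₀, hy₀Y⟩ := hYne
  have hy₀ : y₀ ∈ YF := hYfin.mem_toFinset.mpr hy₀Y
  have hsub : ∀ y ∈ YF, y - x ≠ 0 := fun y hy =>
    sub_ne_zero.mpr fun h => hY (h ▸ hYfin.mem_toFinset.mp hy)
  set f₀ := fc (y₀ - x) with hf₀def
  have hf : ∀ y ∈ YF, fc (y - x) = f₀ := fun y hy => fc_const hn (hsub y hy) (hsub y₀ hy₀)
  have hq2 : 2 ≤ q := Fintype.one_lt_card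
  have hNpos : 0 < N := N_pos hn
  -- sum of zc
  have S1n : ∑ W ∈ S3 F n, zc W = YF.card * f₀ := by
    calc ∑ W ∈ S3 F n, zc W
        = ∑ W ∈ S3 F n, ∑ y ∈ YF, (if y - x ∈ W then 1 else 0) :=
          Finset.sum_congr rfl fun W _ => Finset.card_filter _ _
      _ = ∑ y ∈ YF, ∑ W ∈ S3 F n, (if y - x ∈ W then 1 else 0) := Finset.sum_comm
      _ = ∑ y ∈ YF, fc (y - x) :=
          Finset.sum_congr rfl fun y _ => (Finset.card_filter _ _).symm
      _ = ∑ y ∈ YF, f₀ := Finset.sum_congr rfl hf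
      _ = YF.card * f₀ := by rw [Finset.sum_const, smul_eq_mul]
  -- sum of squares
  have hmul : ∀ (a b : Prop), (if a then (1:ℕ) else 0) * (if b then 1 else 0)
      = if a ∧ b then 1 else 0 := fun a b => by
    by_cases ha : a <;> by_cases hb : b <;> simp [ha, hb]
  have step1 : ∑ W ∈ S3 F n, (zc W) ^ 2
      = ∑ y ∈ YF, ∑ y' ∈ YF, gc (y - x) (y' - x) := by
    calc ∑ W ∈ S3 F n, (zc W) ^ 2
        = ∑ W ∈ S3 F n, ∑ y ∈ YF, ∑ y' ∈ YF,
            (if (y - x ∈ W ∧ y' - x ∈ W) then 1 else 0) := by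
          refine Finset.sum_congr rfl fun W _ => ?_
          rw [sq]
          rw [show zc W = ∑ y ∈ YF, (if y - x ∈ W then (1:ℕ) else 0) from
            Finset.card_filter _ _, Finset.sum_mul_sum]
          exact Finset.sum_congr rfl fun y _ => Finset.sum_congr rfl fun y' _ => hmul _ _
      _ = ∑ y ∈ YF, ∑ y' ∈ YF, ∑ W ∈ S3 F n,
            (if (y - x ∈ W ∧ y' - x ∈ W) then 1 else 0) := by
          rw [Finset.sum_comm]
          exact Finset.sum_congr rfl fun y _ => Finset.sum_comm
      _ = ∑ y ∈ YF, ∑ y' ∈ YF, gc (y - x) (y' - x) :=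
          Finset.sum_congr rfl fun y _ => Finset.sum_congr rfl fun y' _ =>
            (Finset.card_filter _ _).symm
  have hpair : ∀ y ∈ YF, ∀ y' ∈ YF, N * gc (y - x) (y' - x)
      ≤ f₀ * f₀ + (if (y - x) ∈ span F {y' - x} then N * f₀ else 0) := by
    intro y hy y' hy'
    by_cases hli : LinearIndependent F ![y - x, y' - x]
    · have h1 := Ngc_le hn hli
      rw [hf y hy] at h1
      exact le_trans h1 (Nat.le_add_right _ _)
    · have hdep : (y - x) ∈ span F {y' - x} := by
        rw [ind_iff] at hli
        push_neg at hli
        exact hli (hsub y' hy')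
      rw [if_pos hdep]
      have hg : gc (y - x) (y' - x) = fc (y' - x) := by
        rw [gc_symm]; exact gc_dep (hsub y' hy') hdep
      rw [hg, hf y' hy']
      exact Nat.le_add_left _ _
  have hdepcount : ∀ y ∈ YF,
      (YF.filter fun y' => (y - x) ∈ span F {y' - x}).card ≤ q - 1 := by
    intro y hy
    have heq : YF.filter (fun y' => (y - x) ∈ span F {y' - x})
        = YF.filter (fun y' => (y - x) ∈ span F {y' - x} ∧ y' - x ≠ 0) := by
      apply Finset.filter_congr
      intro y' hy'
      simp [hsub y' hy']
    rw [heq]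
    exact dep_count (hsub y hy) YF x
  have S2n : N * (∑ W ∈ S3 F n, (zc W) ^ 2)
      ≤ (YF.card * f₀) ^ 2 + YF.card * ((q - 1) * (N * f₀)) := by
    rw [step1, Finset.mul_sum]
    calc ∑ y ∈ YF, N * (∑ y' ∈ YF, gc (y - x) (y' - x))
        = ∑ y ∈ YF, ∑ y' ∈ YF, N * gc (y - x) (y' - x) := by
          exact Finset.sum_congr rfl fun y _ => Finset.mul_sum _ _ _
      _ ≤ ∑ y ∈ YF, ∑ y' ∈ YF,
            (f₀ * f₀ + (if (y - x) ∈ span F {y' - x} then N * f₀ else 0)) := by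
          refine Finset.sum_le_sum fun y hy => Finset.sum_le_sum fun y' hy' => ?_
          exact hpair y hy y' hy'
      _ = ∑ y ∈ YF, (YF.card * (f₀ * f₀)
            + ∑ y' ∈ YF, (if (y - x) ∈ span F {y' - x} then N * f₀ else 0)) := by
          refine Finset.sum_congr rfl fun y _ => ?_
          rw [Finset.sum_add_distrib, Finset.sum_const, smul_eq_mul]
      _ ≤ ∑ y ∈ YF, (YF.card * (f₀ * f₀) + (q - 1) * (N * f₀)) := by
          refine Finset.sum_le_sum fun y hy => add_le_add_right ?_ _
          calc ∑ y' ∈ YF, (if (y - x) ∈ span F {y' - x} then N * f₀ else 0)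
              = (YF.filter fun y' => (y - x) ∈ span F {y' - x}).card * (N * f₀) := by
                rw [← Finset.sum_filter, Finset.sum_const, smul_eq_mul]
            _ ≤ (q - 1) * (N * f₀) :=
                Nat.mul_le_mul_right _ (hdepcount y hy)
      _ = YF.card * (YF.card * (f₀ * f₀) + (q - 1) * (N * f₀)) := by
          rw [Finset.sum_const, smul_eq_mul]
      _ = (YF.card * f₀) ^ 2 + YF.card * ((q - 1) * (N * f₀)) := by ring
  -- pass to the reals
  have hNR : (0:ℝ) < (N : ℝ) := by exact_mod_cast hNpos
  have hqR : (0:ℝ) < (q : ℝ) := by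
    have : 0 < q := by omega
    exact_mod_cast this
  have hqnR : (0:ℝ) < (q : ℝ) ^ n := by positivity
  have hcast2 : ∑ W ∈ S3 F n, ((zc W : ℕ) : ℝ) ^ 2
      = ((∑ W ∈ S3 F n, (zc W) ^ 2 : ℕ) : ℝ) := by
    push_cast; rfl
  have hcast1 : ∑ W ∈ S3 F n, ((zc W : ℕ) : ℝ) = ((YF.card * f₀ : ℕ) : ℝ) := by
    rw [← S1n]; push_cast; rfl
  rw [hcast2, hcast1]
  set A : ℕ := ∑ W ∈ S3 F n, (zc W) ^ 2 with hAdef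
  set D : ℕ := YF.card * ((q - 1) * (N * f₀)) with hDdef
  have hN0 : (N : ℝ) ≠ 0 := ne_of_gt hNR
  set B : ℕ := YF.card * f₀ with hBdef
  have h2 : (N : ℝ) * A - ((B : ℕ) : ℝ) ^ 2 ≤ ((D : ℕ) : ℝ) := by
    have hc : ((N * A : ℕ) : ℝ) ≤ ((B ^ 2 + D : ℕ) : ℝ) := Nat.cast_le.mpr S2n
    push_cast at hc
    linarith
  have key1 : ((A : ℕ) : ℝ) / N - (((B : ℕ) : ℝ) / N) ^ 2 ≤ ((D : ℕ) : ℝ) / ((N : ℝ)) ^ 2 := by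
    have e1 : ((N : ℝ) * A) / (N : ℝ) ^ 2 = ((A : ℕ) : ℝ) / N := by
      rw [pow_two, mul_div_mul_left _ _ hN0]
    have e2 : (((B : ℕ) : ℝ) / N) ^ 2 = ((B : ℕ) : ℝ) ^ 2 / (N : ℝ) ^ 2 := div_pow _ _ 2
    calc ((A : ℕ) : ℝ) / N - (((B : ℕ) : ℝ) / N) ^ 2
        = ((N : ℝ) * A) / (N : ℝ) ^ 2 - ((B : ℕ) : ℝ) ^ 2 / (N : ℝ) ^ 2 := by rw [e1, e2]
      _ = ((N : ℝ) * A - ((B : ℕ) : ℝ) ^ 2) / (N : ℝ) ^ 2 := (sub_div _ _ _).symm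
      _ ≤ ((D : ℕ) : ℝ) / ((N : ℝ)) ^ 2 := by gcongr
  refine le_trans key1 ?_
  have hr : 2 * ((YF.card : ℝ) / (q : ℝ) ^ n) * (q : ℝ) ^ 4
      = (2 * (YF.card : ℝ) * (q : ℝ) ^ 4) / (q : ℝ) ^ n := by ring
  rw [hr, div_le_div_iff₀ (by positivity) hqnR]
  have hfq := fq_bound hn (hsub y₀ hy₀)
  have hNat : D * q ^ n ≤ 2 * YF.card * q ^ 4 * N ^ 2 := by
    calc D * q ^ n = (YF.card * N) * ((q - 1) * f₀ * q ^ n) := by rw [hDdef]; ring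
      _ ≤ (YF.card * N) * (2 * q ^ 4 * N) := Nat.mul_le_mul_left _ hfq
      _ = 2 * YF.card * q ^ 4 * N ^ 2 := by ring
  exact_mod_cast hNat
end ZVarianceAux
end

section
/- Let n ≥ 3, d ≥ 1, and let g, h : F_q^n → F_q be functions given by n-variate polynomials over F_q of total degree at most d with g ≠ h (as functions). Then for any two distinct points x, y ∈ F_q^n, the probability over a uniformly random cube C ∈ 𝒞_{x,y} that g|_C = h|_C is at most 4d²/q². -/
open MvPolynomial

set_option linter.unusedSectionVars false
set_option maxHeartbeats 1000000

namespace CubeAux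
open Module Submodule

lemma sz_aux {F : Type} [Field F] [Fintype F] :
    ∀ (n : ℕ) (f : MvPolynomial (Fin n) F), f ≠ 0 →
    {z : Fin n → F | eval z f = 0}.ncard * Fintype.card F ≤
      f.totalDegree * (Fintype.card F) ^ n := by
  classical
  intro n
  induction n with
  | zero =>
    intro f hf
    obtain ⟨a, rfl⟩ := MvPolynomial.C_surjective (Fin 0) f
    have ha : a ≠ 0 := fun h => hf (by simp [h])
    have h0 : {z : Fin 0 → F | eval z (C a) = 0} = ∅ := by
      ext z; simp [ha]
    rw [h0]; simp
  | succ n ih =>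
    intro f hf
    set q := Fintype.card F with hq
    set p := finSuccEquiv F n f with hp
    have hp0 : p ≠ 0 := by
      simp only [hp, ne_eq, EmbeddingLike.map_eq_zero_iff]; exact hf
    set k := p.natDegree with hk
    set g := p.leadingCoeff with hg
    have hg0 : g ≠ 0 := Polynomial.leadingCoeff_ne_zero.mpr hp0
    have hdeg : g.totalDegree + k ≤ f.totalDegree := by
      exact totalDegree_coeff_finSuccEquiv_add_le f k
        (by rwa [← Polynomial.leadingCoeff] )
    -- Finset versions
    set Z : Finset (Fin (n+1) → F) := Finset.univ.filter (fun z => eval z f = 0) with hZ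
    set Zg : Finset (Fin n → F) := Finset.univ.filter (fun a => eval a g = 0) with hZg
    have hncard : {z : Fin (n+1) → F | eval z f = 0}.ncard = Z.card := by
      rw [Set.ncard_eq_toFinset_card']; congr 1; ext z; simp [hZ]
    have hncardg : {a : Fin n → F | eval a g = 0}.ncard = Zg.card := by
      rw [Set.ncard_eq_toFinset_card']; congr 1; ext z; simp [hZg]
    -- fiberwise count
    have hfib : Z.card = ∑ a : Fin n → F, (Z.filter (fun z => Fin.tail z = a)).card :=
      Finset.card_eq_sum_card_fiberwise (fun z _ => Finset.mem_univ (Fin.tail z))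
    have hbound : ∀ a : Fin n → F,
        (Z.filter (fun z => Fin.tail z = a)).card ≤ if eval a g = 0 then q else k := by
      intro a
      by_cases hga : eval a g = 0
      · simp only [hga, if_true]
        calc (Z.filter (fun z => Fin.tail z = a)).card
            ≤ (Finset.univ : Finset F).card := by
              apply Finset.card_le_card_of_injOn (fun z => z 0)
              · intro z _; exact Finset.mem_univ _
              · intro z1 h1 z2 h2 h12
                simp only [Finset.mem_coe, Finset.mem_filter] at h1 h2
                have h00 : z1 0 = z2 0 := h12
                rw [← Fin.cons_self_tail z1, ← Fin.cons_self_tail z2, h1.2, h2.2, h00]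
          _ = q := by rw [Finset.card_univ]
      · simp only [hga, if_false]
        set P := Polynomial.map (eval a) p with hP
        have hP0 : P ≠ 0 := fun h => hga (by
          have := Polynomial.coeff_map (eval a) k (p := p)
          rw [← hP, h, Polynomial.coeff_zero] at this
          exact this.symm)
        calc (Z.filter (fun z => Fin.tail z = a)).card
            ≤ P.roots.toFinset.card := by
              apply Finset.card_le_card_of_injOn (fun z => z 0)
              · intro z hz
                simp only [hZ, Finset.mem_coe, Finset.mem_filter, Finset.mem_univ, true_and] at hz
                rw [Finset.mem_coe, Multiset.mem_toFinset, Polynomial.mem_roots hP0]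
                have heq := eval_eq_eval_mv_eval' (Fin.tail z) (z 0) f
                rw [Fin.cons_self_tail, hz.2] at heq
                show Polynomial.eval (z 0) P = 0
                rw [hP, ← heq, hz.1]
              · intro z1 h1 z2 h2 h12
                simp only [Finset.mem_coe, Finset.mem_filter] at h1 h2
                have h00 : z1 0 = z2 0 := h12
                rw [← Fin.cons_self_tail z1, ← Fin.cons_self_tail z2, h1.2, h2.2, h00]
          _ ≤ P.roots.card := P.roots.toFinset_card_le
          _ ≤ P.natDegree := (Polynomial.card_roots' P)
          _ ≤ k := Polynomial.natDegree_map_le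
    have hZcard : Z.card ≤ Zg.card * q + q ^ n * k := by
      rw [hfib]
      calc ∑ a : Fin n → F, (Z.filter (fun z => Fin.tail z = a)).card
          ≤ ∑ a : Fin n → F, (if eval a g = 0 then q else k) :=
            Finset.sum_le_sum (fun a _ => hbound a)
        _ ≤ ∑ a : Fin n → F, ((if eval a g = 0 then q else 0) + k) := by
            apply Finset.sum_le_sum; intro a _
            by_cases hga : eval a g = 0 <;> simp [hga]
        _ = (∑ a : Fin n → F, (if eval a g = 0 then q else 0)) + q ^ n * k := by
            rw [Finset.sum_add_distrib]
            congr 1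
            simp [Finset.card_univ, Fintype.card_fun, mul_comm, hq]
        _ = Zg.card * q + q ^ n * k := by
            congr 1
            rw [← Finset.sum_filter, Finset.sum_const, smul_eq_mul, mul_comm]
    have ihg := ih g hg0
    rw [hncardg] at ihg
    rw [hncard]
    have hq1 : 1 ≤ q := Fintype.card_pos
    calc Z.card * q ≤ (Zg.card * q + q ^ n * k) * q :=
          Nat.mul_le_mul_right q hZcard
      _ = Zg.card * q * q + q ^ (n+1) * k := by ring
      _ ≤ g.totalDegree * q ^ n * q + q ^ (n+1) * k := by
          exact Nat.add_le_add_right (Nat.mul_le_mul_right q ihg) _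
      _ = (g.totalDegree + k) * q ^ (n+1) := by ring
      _ ≤ f.totalDegree * q ^ (n+1) := Nat.mul_le_mul_right _ hdeg
open MvPolynomial Module Submodule

variable {F : Type} [Field F] [Fintype F]

section LA
variable {M : Type} [AddCommGroup M] [Module F M] [FiniteDimensional F M]

lemma rank_sup_span_singleton {W : Submodule F M} {u : M} (hu : u ∉ W) :
    finrank F ↥(W ⊔ span F {u}) = finrank F W + 1 := by
  have hu0 : u ≠ 0 := fun h => hu (h ▸ W.zero_mem)
  have hinf : W ⊓ span F {u} = ⊥ := by
    rw [eq_bot_iff]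
    rintro y ⟨hyW, hyu⟩
    obtain ⟨c, rfl⟩ := mem_span_singleton.mp hyu
    rcases eq_or_ne c 0 with rfl | hc
    · simp
    · exact absurd (by simpa [hc] using W.smul_mem c⁻¹ hyW) hu
  have := Submodule.finrank_sup_add_finrank_inf_eq W (span F {u})
  rw [hinf, finrank_bot, add_zero, finrank_span_singleton hu0] at this
  omega

lemma span_insert_rank {s : Set M} {u : M} (hu : u ∉ span F s) :
    finrank F ↥(span F (insert u s)) = finrank F ↥(span F s) + 1 := by
  rw [Submodule.span_insert, sup_comm]
  exact rank_sup_span_singleton hu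

lemma rank_span_triple {e u v : M} (he : e ≠ 0) (hu : u ∉ span F {e})
    (hv : v ∉ span F {e, u}) : finrank F ↥(span F {e, u, v}) = 3 := by
  have h1 : finrank F ↥(span F ({e} : Set M)) = 1 := finrank_span_singleton he
  have h2 : finrank F ↥(span F ({e, u} : Set M)) = 2 := by
    have : ({e, u} : Set M) = insert u {e} := by ext z; simp; tauto
    rw [this, span_insert_rank hu, h1]
  have h3 : ({e, u, v} : Set M) = insert v {e, u} := by ext z; simp; tauto
  rw [h3, span_insert_rank hv, h2]

lemma span_pair_le_two (a b : M) : finrank F ↥(span F ({a, b} : Set M)) ≤ 2 := by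
  classical
  refine le_trans (finrank_span_le_card _) ?_
  rw [Set.toFinset_insert, Set.toFinset_singleton]
  exact le_trans (Finset.card_insert_le _ _) (by simp)

/-- span of triple is `V` iff the generic conditions hold. -/
lemma span_triple_eq_iff {V : Submodule F M} (hV : finrank F V = 3) {e : M}
    (he : e ∈ V) (he0 : e ≠ 0) (u v : M) :
    span F {e, u, v} = V ↔ (u ∈ V ∧ u ∉ span F {e}) ∧ (v ∈ V ∧ v ∉ span F {e, u}) := by
  constructor
  · intro hsp
    have huV : u ∈ V := hsp ▸ subset_span (by simp)
    have hvV : v ∈ V := hsp ▸ subset_span (by simp)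
    refine ⟨⟨huV, fun hu => ?_⟩, hvV, fun hv => ?_⟩
    · have : span F ({e, u, v} : Set M) = span F {e, v} := by
        have h3 : ({e, u, v} : Set M) = insert u {e, v} := by ext z; simp; tauto
        rw [h3, span_insert_eq_span]
        exact span_mono (by simp) hu
      have := span_pair_le_two (F := F) e v
      rw [← ‹span F ({e, u, v} : Set M) = span F {e, v}›, hsp, hV] at this
      omega
    · have : span F ({e, u, v} : Set M) = span F {e, u} := by
        have h3 : ({e, u, v} : Set M) = insert v {e, u} := by ext z; simp; tauto
        rw [h3, span_insert_eq_span hv]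
      have h2 := span_pair_le_two (F := F) e u
      rw [← this, hsp, hV] at h2
      omega
  · rintro ⟨⟨huV, hu⟩, hvV, hv⟩
    apply Submodule.eq_of_le_of_finrank_le
    · rw [span_le]; intro z hz
      rcases hz with rfl | rfl | rfl
      exacts [he, huV, hvV]
    · rw [hV, rank_span_triple he0 hu hv]
end LA

lemma ncard_setOf_eq_filter {α : Type} [Fintype α] (P : α → Prop) [DecidablePred P] :
    {a | P a}.ncard = (Finset.univ.filter P).card := by
  rw [Set.ncard_eq_toFinset_card']; congr 1; ext z; simp

lemma ncard_fiber_const {α β : Type} [Fintype α] [Finite β] (f : α → β) (T : Set β) (m : ℕ)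
    (h : ∀ C ∈ T, {a | f a = C}.ncard = m) : {a | f a ∈ T}.ncard = T.ncard * m := by
  classical
  have : Fintype β := Fintype.ofFinite β
  rw [ncard_setOf_eq_filter]
  have key : ∀ C ∈ T.toFinset,
      ((Finset.univ.filter fun a => f a ∈ T).filter fun a => f a = C).card = m := by
    intro C hC
    have hCT : C ∈ T := by simpa using hC
    rw [← h C hCT, ncard_setOf_eq_filter]
    congr 1
    ext a
    simp only [Finset.mem_filter, Finset.mem_univ, true_and]
    exact ⟨fun ⟨_, h2⟩ => h2, fun h2 => ⟨h2 ▸ hCT, h2⟩⟩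
  rw [Finset.card_eq_sum_card_fiberwise (f := f) (t := T.toFinset)
    (fun a ha => by simpa using (Finset.mem_filter.mp ha).2),
    Finset.sum_congr rfl key, Finset.sum_const, smul_eq_mul, Set.ncard_eq_toFinset_card']

lemma ncard_dep_prod {α β : Type} [Fintype α] [Fintype β] (A : Set α) (B : α → Set β) (b : ℕ)
    (hB : ∀ a ∈ A, (B a).ncard = b) :
    {p : α × β | p.1 ∈ A ∧ p.2 ∈ B p.1}.ncard = A.ncard * b := by
  classical
  rw [ncard_setOf_eq_filter]
  have key : ∀ a ∈ A.toFinset,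
      ((Finset.univ.filter fun p : α × β => p.1 ∈ A ∧ p.2 ∈ B p.1).filter
        fun p => p.1 = a).card = b := by
    intro a ha
    have haA : a ∈ A := by simpa using ha
    rw [← hB a haA, Set.ncard_eq_toFinset_card']
    refine Finset.card_bij' (fun p _ => p.2) (fun v _ => (a, v)) ?hi ?hj ?li ?ri
    case hi =>
      intro p hp
      simp only [Finset.mem_filter, Finset.mem_univ, true_and] at hp
      simp only [Set.mem_toFinset]
      exact hp.2 ▸ hp.1.2
    case hj =>
      intro v hv
      simp only [Finset.mem_filter, Finset.mem_univ, true_and]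
      exact ⟨⟨haA, by simpa using hv⟩, trivial⟩
    case li =>
      intro p hp
      simp only [Finset.mem_filter, Finset.mem_univ, true_and] at hp
      simp only [Prod.ext_iff, and_true]
      exact hp.2.symm
    case ri => intro v hv; rfl
  rw [Finset.card_eq_sum_card_fiberwise (f := Prod.fst) (t := A.toFinset)
    (fun p hp => by simpa using (Finset.mem_filter.mp hp).2.1),
    Finset.sum_congr rfl key, Finset.sum_const, smul_eq_mul, Set.ncard_eq_toFinset_card']


section Cube
variable {F : Type} [Field F] [Fintype F] {n : ℕ}

instance : Finite (AffineSubspace F (Fin n → F)) :=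
  Finite.of_injective (fun C => (C : Set (Fin n → F))) SetLike.coe_injective

lemma ncard_submodule (W : Submodule F (Fin n → F)) :
    (W : Set (Fin n → F)).ncard = Fintype.card F ^ finrank F W := by
  haveI : Fintype W := Fintype.ofFinite W
  have h1 : ((W : Set (Fin n → F))).ncard = Nat.card W := (Nat.card_coe_set_eq _).symm
  rw [h1, Nat.card_eq_fintype_card, Module.card_eq_pow_finrank (K := F)]

lemma direction_affineSpan_quad (x y z w : Fin n → F) :
    (affineSpan F {x, y, z, w}).direction = span F {y - x, z - x, w - x} := by
  rw [direction_affineSpan,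
    vectorSpan_eq_span_vsub_set_right F (Set.mem_insert x {y, z, w})]
  have : (· -ᵥ x) '' ({x, y, z, w} : Set (Fin n → F)) =
      insert 0 {y - x, z - x, w - x} := by
    simp only [Set.image_insert_eq, Set.image_singleton, vsub_eq_sub, sub_self]
  rw [this]
  exact Submodule.span_insert_zero

lemma mem_fiber_iff {x y : Fin n → F} {C : AffineSubspace F (Fin n → F)}
    (hC : C ∈ cubesOn2 F n x y) (z w : Fin n → F) :
    affineSpan F {x, y, z, w} = C ↔ span F {y - x, z - x, w - x} = C.direction := by
  constructor
  · intro h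
    rw [← direction_affineSpan_quad, h]
  · intro h
    apply AffineSubspace.ext_of_direction_eq
    · rw [direction_affineSpan_quad, h]
    · exact ⟨x, subset_affineSpan F _ (Set.mem_insert x _), hC.2.1⟩

end Cube

section Main
variable {F : Type} [Field F] [Fintype F] {n : ℕ}

lemma fiber_count {x y : Fin n → F} (hxy : x ≠ y) {C : AffineSubspace F (Fin n → F)}
    (hC : C ∈ cubesOn2 F n x y) :
    {p : (Fin n → F) × (Fin n → F) | affineSpan F {x, y, p.1, p.2} = C}.ncard =
      (Fintype.card F ^ 3 - Fintype.card F) * (Fintype.card F ^ 3 - Fintype.card F ^ 2) := by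
  classical
  set q := Fintype.card F with hq
  have hV3 : finrank F C.direction = 3 := hC.1.2
  have he : y - x ∈ C.direction := by
    have := AffineSubspace.vsub_mem_direction hC.2.2 hC.2.1
    simpa using this
  have he0 : y - x ≠ 0 := sub_ne_zero.mpr (Ne.symm hxy)
  set A : Set (Fin n → F) := {u | u ∈ C.direction ∧ u ∉ span F {y - x}} with hA
  set B : (Fin n → F) → Set (Fin n → F) :=
    fun u => {v | v ∈ C.direction ∧ v ∉ span F {y - x, u}} with hB
  set T : Set ((Fin n → F) × (Fin n → F)) := {p | p.1 ∈ A ∧ p.2 ∈ B p.1} with hT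
  have hAcard : A.ncard = q ^ 3 - q := by
    have h1 : A = (C.direction : Set (Fin n → F)) \ (span F {y - x} : Set (Fin n → F)) := rfl
    rw [h1, Set.ncard_diff]
    · rw [ncard_submodule, ncard_submodule, hV3, finrank_span_singleton he0, pow_one]
    · exact fun v hv => (span_le.mpr (by simpa using he)) hv
  have hBcard : ∀ u ∈ A, (B u).ncard = q ^ 3 - q ^ 2 := by
    intro u hu
    have huV : u ∈ C.direction := hu.1
    have h1 : B u = (C.direction : Set (Fin n → F)) \ (span F {y - x, u} : Set (Fin n → F)) :=
      rfl
    have hr2 : finrank F ↥(span F ({y - x, u} : Set (Fin n → F))) = 2 := by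
      have hins : ({y - x, u} : Set (Fin n → F)) = insert u {y - x} := by ext z; simp; tauto
      rw [hins, span_insert_rank hu.2, finrank_span_singleton he0]
    rw [h1, Set.ncard_diff]
    · rw [ncard_submodule, ncard_submodule, hV3, hr2]
    · refine fun v hv => (span_le.mpr ?_) hv
      intro z hz; rcases hz with rfl | rfl; exacts [he, huV]
  have himg : {p : (Fin n → F) × (Fin n → F) | affineSpan F {x, y, p.1, p.2} = C} =
      (fun p : (Fin n → F) × (Fin n → F) => (p.1 + x, p.2 + x)) '' T := by
    ext p
    simp only [Set.mem_image, Set.mem_setOf_eq]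
    constructor
    · intro hsp
      have hsp' := (mem_fiber_iff hC p.1 p.2).mp hsp
      have hcond := (span_triple_eq_iff hV3 he he0 (p.1 - x) (p.2 - x)).mp hsp'
      refine ⟨(p.1 - x, p.2 - x), ⟨⟨hcond.1.1, hcond.1.2⟩, hcond.2.1, hcond.2.2⟩, by simp⟩
    · rintro ⟨t, ht, rfl⟩
      apply (mem_fiber_iff hC _ _).mpr
      apply (span_triple_eq_iff hV3 he he0 _ _).mpr
      simp only [add_sub_cancel_right]
      exact ⟨⟨ht.1.1, ht.1.2⟩, ht.2.1, ht.2.2⟩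
  have hinj : Function.Injective
      (fun p : (Fin n → F) × (Fin n → F) => (p.1 + x, p.2 + x)) := by
    intro a b hab
    simp only [Prod.ext_iff] at hab ⊢
    exact ⟨add_right_cancel hab.1, add_right_cancel hab.2⟩
  rw [himg, Set.ncard_image_of_injective _ hinj, hT,
    ncard_dep_prod A B (q ^ 3 - q ^ 2) hBcard, hAcard]

lemma pair_lower {x y : Fin n → F} (hxy : x ≠ y) :
    (Fintype.card F ^ n - Fintype.card F) * (Fintype.card F ^ n - Fintype.card F ^ 2) ≤
    {p : (Fin n → F) × (Fin n → F) |
      affineSpan F {x, y, p.1, p.2} ∈ cubesOn2 F n x y}.ncard := by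
  classical
  set q := Fintype.card F with hq
  have he0 : y - x ≠ 0 := sub_ne_zero.mpr (Ne.symm hxy)
  set A : Set (Fin n → F) := {u | u ∉ span F {y - x}} with hA
  set B : (Fin n → F) → Set (Fin n → F) := fun u => {v | v ∉ span F {y - x, u}} with hB
  set T : Set ((Fin n → F) × (Fin n → F)) := {p | p.1 ∈ A ∧ p.2 ∈ B p.1} with hT
  have hcardM : Fintype.card (Fin n → F) = q ^ n := by
    rw [Fintype.card_fun, Fintype.card_fin]
  have hAcard : A.ncard = q ^ n - q := by
    have h1 : A = Set.univ \ (span F {y - x} : Set (Fin n → F)) := by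
      ext u; simp [hA]
    rw [h1, Set.ncard_diff (Set.subset_univ _), ncard_submodule,
      finrank_span_singleton he0, pow_one, Set.ncard_univ, Nat.card_eq_fintype_card, hcardM]
  have hBcard : ∀ u ∈ A, (B u).ncard = q ^ n - q ^ 2 := by
    intro u hu
    have h1 : B u = Set.univ \ (span F {y - x, u} : Set (Fin n → F)) := by
      ext v; simp [hB]
    have hr2 : finrank F ↥(span F ({y - x, u} : Set (Fin n → F))) = 2 := by
      have hins : ({y - x, u} : Set (Fin n → F)) = insert u {y - x} := by ext z; simp; tauto
      rw [hins, span_insert_rank hu, finrank_span_singleton he0]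
    rw [h1, Set.ncard_diff (Set.subset_univ _), ncard_submodule, hr2,
      Set.ncard_univ, Nat.card_eq_fintype_card, hcardM]
  have hTcard : T.ncard = (q ^ n - q) * (q ^ n - q ^ 2) := by
    rw [hT, ncard_dep_prod A B (q ^ n - q ^ 2) hBcard, hAcard]
  have hinj : Function.Injective
      (fun p : (Fin n → F) × (Fin n → F) => (p.1 + x, p.2 + x)) := by
    intro a b hab
    simp only [Prod.ext_iff] at hab ⊢
    exact ⟨add_right_cancel hab.1, add_right_cancel hab.2⟩
  have hsub : (fun p : (Fin n → F) × (Fin n → F) => (p.1 + x, p.2 + x)) '' T ⊆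
      {p : (Fin n → F) × (Fin n → F) | affineSpan F {x, y, p.1, p.2} ∈ cubesOn2 F n x y} := by
    rintro _ ⟨t, ht, rfl⟩
    have hx : x ∈ affineSpan F ({x, y, t.1 + x, t.2 + x} : Set (Fin n → F)) :=
      subset_affineSpan F _ (by simp)
    have hy : y ∈ affineSpan F ({x, y, t.1 + x, t.2 + x} : Set (Fin n → F)) :=
      subset_affineSpan F _ (by simp)
    refine ⟨⟨⟨x, hx⟩, ?_⟩, hx, hy⟩
    rw [direction_affineSpan_quad]
    have e1 : t.1 + x - x = t.1 := add_sub_cancel_right _ _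
    have e2 : t.2 + x - x = t.2 := add_sub_cancel_right _ _
    rw [e1, e2]
    exact rank_span_triple he0 ht.1 ht.2
  calc (q ^ n - q) * (q ^ n - q ^ 2) = T.ncard := hTcard.symm
    _ = ((fun p : (Fin n → F) × (Fin n → F) => (p.1 + x, p.2 + x)) '' T).ncard :=
        (Set.ncard_image_of_injective _ hinj).symm
    _ ≤ _ := Set.ncard_le_ncard hsub (Set.toFinite _)


end Main
end CubeAux

open CubeAux Module Submodule in

/-- If `g ≠ h` as functions, both given by polynomials of total degree at
most `d`, then for distinct points `x, y`, the fraction of cubes `C ∈ 𝒞_{x,y}` on which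
`g|_C = h|_C` is at most `4d²/q²`. -/
theorem distinct_polys_rarely_agree {F : Type} [Field F] [Fintype F] {n d : ℕ}
    (hn : 3 ≤ n) (hd : 1 ≤ d)
    (g h : MvPolynomial (Fin n) F) (hg : g.totalDegree ≤ d) (hh : h.totalDegree ≤ d)
    (hne : ∃ z : Fin n → F, eval z g ≠ eval z h)
    (x y : Fin n → F) (hxy : x ≠ y) :
    ({C ∈ cubesOn2 F n x y | ∀ z : Fin n → F, z ∈ C → eval z g = eval z h}.ncard : ℝ) ≤
      (4 * (d : ℝ) ^ 2 / (Fintype.card F : ℝ) ^ 2) * ((cubesOn2 F n x y).ncard : ℝ) := by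
  classical
  set q := Fintype.card F with hq
  have hq2 : 2 ≤ q := Fintype.one_lt_card
  set f := g - h with hf
  have hf0 : f ≠ 0 := by
    obtain ⟨z, hz⟩ := hne
    intro h0
    apply hz
    have := congrArg (eval z) h0
    rw [hf, map_sub] at this
    simpa [sub_eq_zero] using this
  have hfd : f.totalDegree ≤ d := le_trans (totalDegree_sub g h) (max_le hg hh)
  set Z : Set (Fin n → F) := {z | eval z f = 0} with hZ
  have hZq : Z.ncard * q ≤ d * q ^ n :=
    le_trans (sz_aux n f hf0) (Nat.mul_le_mul_right _ hfd)
  set N := (q ^ 3 - q) * (q ^ 3 - q ^ 2) with hN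
  set Bad := {C ∈ cubesOn2 F n x y | ∀ z : Fin n → F, z ∈ C → eval z g = eval z h} with hBad
  have h1 : {p : (Fin n → F) × (Fin n → F) | affineSpan F {x, y, p.1, p.2} ∈ Bad}.ncard =
      Bad.ncard * N :=
    ncard_fiber_const _ Bad N (fun C hC => fiber_count hxy hC.1)
  have h2 : {p : (Fin n → F) × (Fin n → F) |
        affineSpan F {x, y, p.1, p.2} ∈ cubesOn2 F n x y}.ncard =
      (cubesOn2 F n x y).ncard * N :=
    ncard_fiber_const _ _ N (fun C hC => fiber_count hxy hC)
  have h3 : {p : (Fin n → F) × (Fin n → F) | affineSpan F {x, y, p.1, p.2} ∈ Bad} ⊆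
      {p : (Fin n → F) × (Fin n → F) | p.1 ∈ Z ∧ p.2 ∈ Z} := by
    intro p hp
    have h1m : p.1 ∈ affineSpan F ({x, y, p.1, p.2} : Set (Fin n → F)) :=
      subset_affineSpan F _ (by simp)
    have h2m : p.2 ∈ affineSpan F ({x, y, p.1, p.2} : Set (Fin n → F)) :=
      subset_affineSpan F _ (by simp)
    have hb := hp.2
    constructor
    · show eval p.1 f = 0
      rw [hf, map_sub, sub_eq_zero]
      exact hb p.1 h1m
    · show eval p.2 f = 0
      rw [hf, map_sub, sub_eq_zero]
      exact hb p.2 h2m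
  have h4 : {p : (Fin n → F) × (Fin n → F) | p.1 ∈ Z ∧ p.2 ∈ Z}.ncard =
      Z.ncard * Z.ncard :=
    ncard_dep_prod Z (fun _ => Z) Z.ncard (fun _ _ => rfl)
  have hBadN : Bad.ncard * N ≤ Z.ncard * Z.ncard := by
    rw [← h1, ← h4]
    exact Set.ncard_le_ncard h3 (Set.toFinite _)
  have hlow : (q ^ n - q) * (q ^ n - q ^ 2) ≤ (cubesOn2 F n x y).ncard * N := by
    rw [← h2]; exact pair_lower hxy
  -- arithmetic
  have hqn1 : 2 * q ≤ q ^ n := by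
    calc 2 * q ≤ q * q := Nat.mul_le_mul_right q hq2
      _ = q ^ 2 := (sq q).symm
      _ ≤ q ^ n := Nat.pow_le_pow_right (by omega) (by omega)
  have hqn2 : 2 * q ^ 2 ≤ q ^ n := by
    calc 2 * q ^ 2 ≤ q * q ^ 2 := Nat.mul_le_mul_right _ hq2
      _ = q ^ 3 := by ring
      _ ≤ q ^ n := Nat.pow_le_pow_right (by omega) hn
  have hkey : q ^ n * q ^ n ≤ 4 * ((q ^ n - q) * (q ^ n - q ^ 2)) := by
    have e1 : q ^ n ≤ 2 * (q ^ n - q) := by omega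
    have e2 : q ^ n ≤ 2 * (q ^ n - q ^ 2) := by omega
    calc q ^ n * q ^ n ≤ (2 * (q ^ n - q)) * (2 * (q ^ n - q ^ 2)) :=
          Nat.mul_le_mul e1 e2
      _ = 4 * ((q ^ n - q) * (q ^ n - q ^ 2)) := by ring
  have hNpos : 0 < N := by
    have h3q : q < q ^ 3 := by
      have := Nat.pow_lt_pow_right (show 1 < q by omega) (show 1 < 3 by omega)
      simpa using this
    have h3q2 : q ^ 2 < q ^ 3 := Nat.pow_lt_pow_right (by omega) (by omega)
    exact Nat.mul_pos (by omega) (by omega)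
  have hnat : Bad.ncard * q ^ 2 ≤ 4 * d ^ 2 * (cubesOn2 F n x y).ncard := by
    have hchain : Bad.ncard * q ^ 2 * N ≤ 4 * d ^ 2 * (cubesOn2 F n x y).ncard * N := by
      calc Bad.ncard * q ^ 2 * N = Bad.ncard * N * q ^ 2 := by ring
        _ ≤ Z.ncard * Z.ncard * q ^ 2 := Nat.mul_le_mul_right _ hBadN
        _ = (Z.ncard * q) * (Z.ncard * q) := by ring
        _ ≤ (d * q ^ n) * (d * q ^ n) := Nat.mul_le_mul hZq hZq
        _ = d ^ 2 * (q ^ n * q ^ n) := by ring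
        _ ≤ d ^ 2 * (4 * ((q ^ n - q) * (q ^ n - q ^ 2))) := Nat.mul_le_mul_left _ hkey
        _ ≤ d ^ 2 * (4 * ((cubesOn2 F n x y).ncard * N)) := by
            apply Nat.mul_le_mul_left
            exact Nat.mul_le_mul_left _ hlow
        _ = 4 * d ^ 2 * (cubesOn2 F n x y).ncard * N := by ring
    exact Nat.le_of_mul_le_mul_right hchain hNpos
  have hq0 : (0 : ℝ) < (q : ℝ) ^ 2 := by positivity
  rw [div_mul_eq_mul_div, le_div_iff₀ hq0]
  calc (Bad.ncard : ℝ) * (q : ℝ) ^ 2 = ((Bad.ncard * q ^ 2 : ℕ) : ℝ) := by push_cast; ring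
    _ ≤ ((4 * d ^ 2 * (cubesOn2 F n x y).ncard : ℕ) : ℝ) := by exact_mod_cast hnat
    _ = 4 * (d : ℝ) ^ 2 * ((cubesOn2 F n x y).ncard : ℝ) := by push_cast; ring
end
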